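/- arXiv:math/0201104 — 5 statements merged into one kernel-verified Lean document; each statement's English description precedes it below -/
import Mathlib

section
/- If the pair of flags (B_•, C_•) lies in the orbit F_M for a transport matrix M, then dim(B_i ∩ C_j) = r_{ij}(M) for all (i,j) ∈ [0,q]×[0,r]. -/
open Finset

namespace TwoFlagsLine

/-- Rank numbers `r_{ij}(M) = Σ_{k ≤ i, l ≤ j} m_{kl}` (1-based; zero if `i = 0` or `j = 0`). -/
def rk (m : ℕ → ℕ → ℕ) (i j : ℕ) : ℕ :=
  ∑ k ∈ Finset.Icc 1 i, ∑ l ∈ Finset.Icc 1 j, m k l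

/-- `b` is a composition of `n` with `q` parts `b 1, …, b q`. -/
def IsComposition (n q : ℕ) (b : ℕ → ℕ) : Prop :=
  (∀ i ∈ Finset.Icc 1 q, 0 < b i) ∧ ∑ i ∈ Finset.Icc 1 q, b i = n

/-- `m` is a `q × r` transport matrix for the compositions `b`, `c`. -/
def IsTransport (q r : ℕ) (b c : ℕ → ℕ) (m : ℕ → ℕ → ℕ) : Prop :=
  (∀ i j : ℕ, i ∉ Finset.Icc 1 q ∨ j ∉ Finset.Icc 1 r → m i j = 0) ∧
  (∀ i ∈ Finset.Icc 1 q, ∑ j ∈ Finset.Icc 1 r, m i j = b i) ∧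
  (∀ j ∈ Finset.Icc 1 r, ∑ i ∈ Finset.Icc 1 q, m i j = c j)

/-- `Δ` is a decoration of the matrix `m`. -/
def IsDecoration (q r : ℕ) (m : ℕ → ℕ → ℕ) (Δ : Finset (ℕ × ℕ)) : Prop :=
  Δ.Nonempty ∧
  (∀ p ∈ Δ, 1 ≤ p.1 ∧ p.1 ≤ q ∧ 1 ≤ p.2 ∧ p.2 ≤ r ∧ 0 < m p.1 p.2) ∧
  (∀ p ∈ Δ, ∀ p' ∈ Δ, p ≠ p' → (p.1 < p'.1 ∧ p'.2 < p.2) ∨ (p'.1 < p.1 ∧ p.2 < p'.2))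

/-- `δ_{ij}(Δ) = 1` if every `(k,l) ∈ Δ` has `k ≤ i` or `l ≤ j`, else `0`. -/
def deltaNum (Δ : Finset (ℕ × ℕ)) (i j : ℕ) : ℕ :=
  if ∀ p ∈ Δ, p.1 ≤ i ∨ p.2 ≤ j then 1 else 0

/-- `[S]` : the set of `≤`-maximal elements of `S`. -/
def maxl (S : Finset (ℕ × ℕ)) : Finset (ℕ × ℕ) :=
  S.filter fun p => ∀ p' ∈ S, p ≤ p' → p = p'

/-- The index set `{(i,j,k) : (i,j) ∈ [1,q] × [1,r], 1 ≤ k ≤ m i j}` for a basis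
adapted to the transport matrix `m`. -/
def Idx (q r : ℕ) (m : ℕ → ℕ → ℕ) : Set (ℕ × ℕ × ℕ) :=
  {p | 1 ≤ p.1 ∧ p.1 ≤ q ∧ 1 ≤ p.2.1 ∧ p.2.1 ≤ r ∧ 1 ≤ p.2.2 ∧ p.2.2 ≤ m p.1 p.2.1}

variable (k V : Type*) [Field k] [AddCommGroup V] [Module k V]

/-- The family `v`, restricted to the index set of the transport matrix `m`,
is a basis of `V` indexed by `m`. -/
def IsMBasis (q r : ℕ) (m : ℕ → ℕ → ℕ) (v : ℕ × ℕ × ℕ → V) : Prop :=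
  LinearIndependent k (fun x : Idx q r m => v x.1) ∧
  Submodule.span k (v '' Idx q r m) = ⊤

/-- `(B, C)` lies in the orbit `F_M`: for some basis `v` indexed by `M`,
`B i = span{v_{i'jk} : i' ≤ i}` and `C j = span{v_{ij'k} : j' ≤ j}`. -/
def InOrbit (q r : ℕ) (m : ℕ → ℕ → ℕ) (B C : ℕ → Submodule k V) : Prop :=
  ∃ v : ℕ × ℕ × ℕ → V, IsMBasis k V q r m v ∧
    (∀ i ≤ q, B i = Submodule.span k (v '' {p | p ∈ Idx q r m ∧ p.1 ≤ i})) ∧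
    (∀ j ≤ r, C j = Submodule.span k (v '' {p | p ∈ Idx q r m ∧ p.2.1 ≤ j}))

/-- `(A, B, C)` lies in the orbit `F_{M,Δ}`: for some basis `v` indexed by `M`,
`B, C` are as in `F_M` and `A = span(Σ_{(i,j) ∈ Δ} v_{ij1})`. -/
def InOrbitDec (q r : ℕ) (m : ℕ → ℕ → ℕ) (Δ : Finset (ℕ × ℕ))
    (A : Submodule k V) (B C : ℕ → Submodule k V) : Prop :=
  ∃ v : ℕ × ℕ × ℕ → V, IsMBasis k V q r m v ∧
    (∀ i ≤ q, B i = Submodule.span k (v '' {p | p ∈ Idx q r m ∧ p.1 ≤ i})) ∧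
    (∀ j ≤ r, C j = Submodule.span k (v '' {p | p ∈ Idx q r m ∧ p.2.1 ≤ j})) ∧
    A = Submodule.span k {∑ p ∈ Δ, v (p.1, p.2, 1)}

/-- `B` is a partial flag `0 = B 0 ⊆ B 1 ⊆ ⋯ ⊆ B q = V` with
`dim (B i / B (i-1)) = b i`. -/
def IsFlag (q : ℕ) (b : ℕ → ℕ) (B : ℕ → Submodule k V) : Prop :=
  B 0 = ⊥ ∧ B q = ⊤ ∧ (∀ i : ℕ, 1 ≤ i → i ≤ q → B (i - 1) ≤ B i) ∧
  (∀ i : ℕ, 1 ≤ i → i ≤ q →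
    Module.finrank k (↥(B i) ⧸ Submodule.comap (B i).subtype (B (i - 1))) = b i)


lemma li_span_inf {k V ι : Type*} [Field k] [AddCommGroup V] [Module k V]
    {v : ι → V} (hv : LinearIndependent k v) (s t : Set ι) :
    Submodule.span k (v '' s) ⊓ Submodule.span k (v '' t) =
      Submodule.span k (v '' (s ∩ t)) := by
  refine le_antisymm ?_ (le_inf
    (Submodule.span_mono (Set.image_mono Set.inter_subset_left))
    (Submodule.span_mono (Set.image_mono Set.inter_subset_right)))
  rintro x ⟨hxs, hxt⟩
  have hs : s = (s ∩ t) ∪ (s \ t) := by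
    ext a; by_cases h : a ∈ t <;> simp [h]
  rw [SetLike.mem_coe, hs, Set.image_union, Submodule.span_union, Submodule.mem_sup] at hxs
  obtain ⟨y, hy, z, hz, rfl⟩ := hxs
  have hyt : y ∈ Submodule.span k (v '' t) :=
    Submodule.span_mono (Set.image_mono Set.inter_subset_right) hy
  have hzt : z ∈ Submodule.span k (v '' t) := by
    have := Submodule.sub_mem _ hxt hyt
    simpa using this
  have hz0 : z = 0 :=
    Submodule.disjoint_def.mp (hv.disjoint_span_image Set.disjoint_sdiff_left) z hz hzt
  rw [hz0, add_zero]
  exact hy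

lemma li_span_inf' {k V ι : Type*} [Field k] [AddCommGroup V] [Module k V]
    {v : ι → V} {I : Set ι} (hv : LinearIndependent k (fun x : I => v x.1))
    {s t : Set ι} (hs : s ⊆ I) (ht : t ⊆ I) :
    Submodule.span k (v '' s) ⊓ Submodule.span k (v '' t) =
      Submodule.span k (v '' (s ∩ t)) := by
  have key : ∀ u : Set ι, u ⊆ I →
      v '' u = (fun x : I => v x.1) '' ((Subtype.val : I → ι) ⁻¹' u) := by
    intro u hu
    ext w
    simp only [Set.mem_image, Set.mem_preimage]
    constructor
    · rintro ⟨a, ha, rfl⟩; exact ⟨⟨a, hu ha⟩, ha, rfl⟩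
    · rintro ⟨x, hx, rfl⟩; exact ⟨x.1, hx, rfl⟩
  rw [key s hs, key t ht, key (s ∩ t) (fun x hx => hs hx.1),
    li_span_inf hv, Set.preimage_inter]

lemma finrank_span_finset {k V ι : Type*} [Field k] [AddCommGroup V] [Module k V]
    {v : ι → V} {I : Set ι} (hv : LinearIndependent k (fun x : I => v x.1))
    (F : Finset ι) (hF : ↑F ⊆ I) :
    Module.finrank k ↥(Submodule.span k (v '' ↑F)) = F.card := by
  classical
  let g : {x // x ∈ F} → V := fun x => v x.1
  have hg : LinearIndependent k g := by
    have hgc : g = (fun x : I => v x.1) ∘ (fun x : {x // x ∈ F} => (⟨x.1, hF x.2⟩ : I)) := rfl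
    rw [hgc]
    refine hv.comp _ ?_
    rintro ⟨a, ha⟩ ⟨b, hb⟩ hab
    exact Subtype.ext (by simpa using congrArg Subtype.val hab)
  have hr : Set.range g = v '' ↑F := by
    ext w
    simp only [Set.mem_range, Set.mem_image, Finset.mem_coe, Subtype.exists, g]
    constructor
    · rintro ⟨a, ha, rfl⟩; exact ⟨a, ha, rfl⟩
    · rintro ⟨a, ha, rfl⟩; exact ⟨a, ha, rfl⟩
  rw [← hr, finrank_span_eq_card hg, Fintype.card_coe]

/-- if `(B, C) ∈ F_M`, then `dim (B i ∩ C j) = r_{ij}(M)` for all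
`(i,j) ∈ [0,q] × [0,r]`. -/
theorem orbit_rank (n q r : ℕ) (hn : 0 < n) (hq : 0 < q) (hr : 0 < r)
    (b c : ℕ → ℕ) (hb : IsComposition n q b) (hc : IsComposition n r c)
    {k V : Type*} [Field k] [Infinite k] [AddCommGroup V] [Module k V]
    [FiniteDimensional k V] (hdim : Module.finrank k V = n)
    (m : ℕ → ℕ → ℕ) (hm : IsTransport q r b c m)
    (B C : ℕ → Submodule k V) (horb : InOrbit k V q r m B C) :
    ∀ i ≤ q, ∀ j ≤ r, Module.finrank k ↥(B i ⊓ C j) = rk m i j := by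
  obtain ⟨v, ⟨hli, hsp⟩, hB, hC⟩ := horb
  intro i hi j hj
  classical
  set F : Finset (ℕ × ℕ × ℕ) :=
    (Finset.Icc 1 i ×ˢ Finset.Icc 1 j).biUnion
      (fun kl => (Finset.Icc 1 (m kl.1 kl.2)).image fun cc => (kl.1, kl.2, cc)) with hFdef
  have hFmem : ∀ p : ℕ × ℕ × ℕ, p ∈ F ↔
      (p ∈ Idx q r m ∧ p.1 ≤ i) ∧ (p ∈ Idx q r m ∧ p.2.1 ≤ j) := by
    rintro ⟨a, d, e⟩
    simp only [hFdef, Finset.mem_biUnion, Finset.mem_product, Finset.mem_image,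
      Finset.mem_Icc, Idx, Set.mem_setOf_eq, Prod.mk.injEq, Prod.exists]
    constructor
    · rintro ⟨x, y, ⟨⟨hx1, hx2⟩, hy1, hy2⟩, cc, hc, rfl, rfl, rfl⟩
      exact ⟨⟨⟨hx1, le_trans hx2 hi, hy1, le_trans hy2 hj, hc⟩, hx2⟩,
        ⟨hx1, le_trans hx2 hi, hy1, le_trans hy2 hj, hc⟩, hy2⟩
    · rintro ⟨⟨⟨h1, h2, h3, h4, h5, h6⟩, h7⟩, _, h8⟩
      exact ⟨a, d, ⟨⟨h1, h7⟩, h3, h8⟩, e, ⟨h5, h6⟩, rfl, rfl, rfl⟩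
  have hcard : F.card = rk m i j := by
    rw [hFdef, Finset.card_biUnion]
    · have hprod : rk m i j = ∑ u ∈ Finset.Icc 1 i ×ˢ Finset.Icc 1 j, m u.1 u.2 := by
        rw [rk, Finset.sum_product]
      rw [hprod]
      refine Finset.sum_congr rfl fun kl _ => ?_
      rw [Finset.card_image_of_injective _ (fun a b h => by simpa using h)]
      simp
    · rintro ⟨x, y⟩ _ ⟨x', y'⟩ _ hne
      simp only [Finset.disjoint_left, Finset.mem_image, Finset.mem_Icc]
      rintro p ⟨cc, _, rfl⟩ ⟨cc', _, h⟩
      apply hne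
      simp only [Prod.mk.injEq] at h
      simp [Prod.ext_iff, h.1, h.2.1]
  have hsub : ↑F ⊆ Idx q r m := fun p hp => ((hFmem p).1 hp).1.1
  have hset : {p : ℕ × ℕ × ℕ | p ∈ Idx q r m ∧ p.1 ≤ i} ∩
      {p : ℕ × ℕ × ℕ | p ∈ Idx q r m ∧ p.2.1 ≤ j} = ↑F := by
    ext p
    simp only [Set.mem_inter_iff, Set.mem_setOf_eq, Finset.mem_coe, hFmem p]
  rw [hB i hi, hC j hj,
    li_span_inf' hli (fun p hp => hp.1) (fun p hp => hp.1), hset,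
    finrank_span_finset hli F hsub, hcard]

end TwoFlagsLine
end

section
/- Let B_• and C_• be flags in V with dim(B_i/B_{i−1}) = b_i for i=1,…,q and dim(C_j/C_{j−1}) = c_j for j=1,…,r, and let M be a transport matrix. Then (B_•, C_•) ∈ F_M if and only if dim(B_i ∩ C_j) = r_{ij}(M) for all (i,j) ∈ [1,q]×[1,r]. -/
open Finset

namespace TwoFlagsLine

/-- Auxiliary finset version of a truncated index set. -/
def idxF (m : ℕ → ℕ → ℕ) (N i j : ℕ) : Finset (ℕ × ℕ × ℕ) :=
  ((Finset.Icc 1 i) ×ˢ (Finset.Icc 1 j) ×ˢ (Finset.Icc 1 N)).filter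
    fun p => p.2.2 ≤ m p.1 p.2.1

lemma mem_idxF {m : ℕ → ℕ → ℕ} {N i j : ℕ} {p : ℕ × ℕ × ℕ} :
    p ∈ idxF m N i j ↔ (1 ≤ p.1 ∧ p.1 ≤ i) ∧ (1 ≤ p.2.1 ∧ p.2.1 ≤ j) ∧
      (1 ≤ p.2.2 ∧ p.2.2 ≤ N) ∧ p.2.2 ≤ m p.1 p.2.1 := by
  simp [idxF, Finset.mem_filter, Finset.mem_product, Finset.mem_Icc, and_assoc]

lemma coe_idxF {q r n : ℕ} {m : ℕ → ℕ → ℕ} (hmn : ∀ a b, m a b ≤ n) {i j : ℕ}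
    (hi : i ≤ q) (hj : j ≤ r) :
    (↑(idxF m n i j) : Set (ℕ × ℕ × ℕ)) = {p | p ∈ Idx q r m ∧ p.1 ≤ i ∧ p.2.1 ≤ j} := by
  ext p
  have := hmn p.1 p.2.1
  simp only [Set.mem_setOf_eq, Idx, Finset.mem_coe, mem_idxF]
  constructor
  · rintro ⟨⟨h1, h2⟩, ⟨h3, h4⟩, ⟨h5, h6⟩, h7⟩
    exact ⟨⟨h1, le_trans h2 hi, h3, le_trans h4 hj, h5, h7⟩, h2, h4⟩
  · rintro ⟨⟨h1, h2, h3, h4, h5, h7⟩, h8, h9⟩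
    exact ⟨⟨h1, h8⟩, ⟨h3, h9⟩, ⟨h5, le_trans h7 this⟩, h7⟩

lemma card_idxF {n : ℕ} {m : ℕ → ℕ → ℕ} (hmn : ∀ a b, m a b ≤ n) (i j : ℕ) :
    (idxF m n i j).card = rk m i j := by
  rw [idxF, Finset.card_filter, Finset.sum_product, rk]
  refine Finset.sum_congr rfl fun a _ => ?_
  rw [Finset.sum_product]
  refine Finset.sum_congr rfl fun c _ => ?_
  have h := hmn a c
  calc (∑ x ∈ Finset.Icc 1 n, if x ≤ m a c then 1 else 0)
      = ((Finset.Icc 1 n).filter (fun x => x ≤ m a c)).card := (Finset.card_filter _ _).symm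
    _ = (Finset.Icc 1 (m a c)).card := by
        congr 1; ext x; simp only [Finset.mem_filter, Finset.mem_Icc]; omega
    _ = m a c := by rw [Nat.card_Icc]; omega

lemma rk_succ_left (m : ℕ → ℕ → ℕ) (i j : ℕ) :
    rk m (i + 1) j = rk m i j + ∑ l ∈ Finset.Icc 1 j, m (i + 1) l := by
  rw [rk, rk, Finset.sum_Icc_succ_top (by omega : 1 ≤ i + 1)]

lemma rk_rect (m : ℕ → ℕ → ℕ) (i j : ℕ) :
    rk m (i + 1) (j + 1) + rk m i j
      = rk m i (j + 1) + rk m (i + 1) j + m (i + 1) (j + 1) := by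
  have h1 := rk_succ_left m i (j + 1)
  have h2 := rk_succ_left m i j
  have h3 : ∑ l ∈ Finset.Icc 1 (j + 1), m (i + 1) l
      = ∑ l ∈ Finset.Icc 1 j, m (i + 1) l + m (i + 1) (j + 1) :=
    Finset.sum_Icc_succ_top (by omega) _
  omega

variable (k V : Type*) [Field k] [AddCommGroup V] [Module k V]

lemma finrank_span_image [FiniteDimensional k V] {S : Set (ℕ × ℕ × ℕ)} {v : ℕ × ℕ × ℕ → V}
    (hli : LinearIndependent k (fun x : S => v x.1)) (s : Finset (ℕ × ℕ × ℕ))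
    (hs : ↑s ⊆ S) :
    Module.finrank k (Submodule.span k (v '' ↑s)) = s.card := by
  have hinj : Function.Injective (Set.inclusion hs) := Set.inclusion_injective hs
  have h2 : LinearIndependent k ((fun x : S => v x.1) ∘ Set.inclusion hs) :=
    hli.comp _ hinj
  have h3 : (fun x : (↑s : Set (ℕ × ℕ × ℕ)) => v x.1)
      = (fun x : S => v x.1) ∘ Set.inclusion hs := rfl
  rw [Set.image_eq_range v (↑s : Set (ℕ × ℕ × ℕ))]
  rw [show (Set.range fun x : (↑s : Set (ℕ × ℕ × ℕ)) => v x.1)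
      = Set.range ((fun x : S => v x.1) ∘ Set.inclusion hs) from by rw [← h3]]
  rw [finrank_span_eq_card h2]
  exact Fintype.card_coe s

lemma exists_compl_span [FiniteDimensional k V] (S W : Submodule k V) (hSW : S ≤ W)
    (d : ℕ) (hd : Module.finrank k S + d = Module.finrank k W) :
    ∃ u : ℕ → V, (∀ t, u t ∈ W) ∧
      S ⊔ Submodule.span k (u '' Set.Icc 1 d) = W := by
  set S' := S.comap W.subtype with hS'
  obtain ⟨U, hU⟩ := Submodule.exists_isCompl S'
  have hfS' : Module.finrank k S' = Module.finrank k S :=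
    (Submodule.comapSubtypeEquivOfLe hSW).finrank_eq
  have hadd : Module.finrank k S' + Module.finrank k U = Module.finrank k W := by
    rw [← Submodule.finrank_add_eq_of_isCompl hU]
  have hdU : Module.finrank k ↥U = d := by omega
  let bU := Module.finBasis k ↥U
  let u : ℕ → V := fun t =>
    if h : 1 ≤ t ∧ t ≤ d then
      (W.subtype (U.subtype (bU ⟨t - 1, by rw [hdU]; omega⟩))) else 0
  refine ⟨u, fun t => ?_, ?_⟩
  · by_cases h : 1 ≤ t ∧ t ≤ d
    · simp only [u, dif_pos h]; exact (U.subtype _).2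
    · simp only [u, dif_neg h]; exact W.zero_mem
  · have himg : u '' Set.Icc 1 d
        = W.subtype '' (U.subtype '' (Set.range bU)) := by
      ext x
      constructor
      · rintro ⟨t, ht, rfl⟩
        rw [Set.mem_Icc] at ht
        refine ⟨U.subtype (bU ⟨t - 1, by rw [hdU]; omega⟩), ⟨_, ⟨_, rfl⟩, rfl⟩, ?_⟩
        simp only [u, dif_pos ht]
      · rintro ⟨y, ⟨z, ⟨s, rfl⟩, rfl⟩, rfl⟩
        refine ⟨s.1 + 1, by simp only [Set.mem_Icc]; have := s.2; omega, ?_⟩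
        have hc : 1 ≤ s.1 + 1 ∧ s.1 + 1 ≤ d := by have := s.2; omega
        simp [u, dif_pos hc]
    rw [himg, Submodule.span_image, Submodule.span_image, Module.Basis.span_eq,
      Submodule.map_subtype_top]
    have hmapS : Submodule.map W.subtype S' = S := by
      rw [hS', Submodule.map_comap_subtype, inf_eq_right.mpr hSW]
    rw [← hmapS, ← Submodule.map_sup, hU.sup_eq_top, Submodule.map_subtype_top]

theorem orbit_iff_rank (n q r : ℕ) (hn : 0 < n) (hq : 0 < q) (hr : 0 < r)
    (b c : ℕ → ℕ) (hb : IsComposition n q b) (hc : IsComposition n r c)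
    {k V : Type*} [Field k] [Infinite k] [AddCommGroup V] [Module k V]
    [FiniteDimensional k V] (hdim : Module.finrank k V = n)
    (m : ℕ → ℕ → ℕ) (hm : IsTransport q r b c m)
    (B C : ℕ → Submodule k V) (hB : IsFlag k V q b B) (hC : IsFlag k V r c C) :
    InOrbit k V q r m B C ↔
      ∀ i : ℕ, 1 ≤ i → i ≤ q → ∀ j : ℕ, 1 ≤ j → j ≤ r →
        Module.finrank k ↥(B i ⊓ C j) = rk m i j := by
  obtain ⟨hm0, hmrow, hmcol⟩ := hm
  obtain ⟨hB0, hBtop, hBmono, hBdim⟩ := hB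
  obtain ⟨hC0, hCtop, hCmono, hCdim⟩ := hC
  have hmn : ∀ a b', m a b' ≤ n := by
    intro a b'
    by_cases ha : a ∈ Finset.Icc 1 q
    · by_cases hb' : b' ∈ Finset.Icc 1 r
      · calc m a b' ≤ ∑ j ∈ Finset.Icc 1 r, m a j :=
              Finset.single_le_sum (fun _ _ => Nat.zero_le _) hb'
          _ = b a := hmrow a ha
          _ ≤ ∑ i ∈ Finset.Icc 1 q, b i :=
              Finset.single_le_sum (fun _ _ => Nat.zero_le _) ha
          _ = n := hb.2
      · rw [hm0 a b' (Or.inr hb')]; exact Nat.zero_le _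
    · rw [hm0 a b' (Or.inl ha)]; exact Nat.zero_le _
  constructor
  · rintro ⟨v, ⟨hli, hsp⟩, hBsp, hCsp⟩
    intro i hi1 hi2 j hj1 hj2
    have hBset : {p | p ∈ Idx q r m ∧ p.1 ≤ i} = ↑(idxF m n i r) := by
      rw [coe_idxF hmn hi2 le_rfl]
      ext p
      simp only [Set.mem_setOf_eq]
      exact ⟨fun h => ⟨h.1, h.2, h.1.2.2.2.1⟩, fun h => ⟨h.1, h.2.1⟩⟩
    have hCset : {p | p ∈ Idx q r m ∧ p.2.1 ≤ j} = ↑(idxF m n q j) := by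
      rw [coe_idxF hmn le_rfl hj2]
      ext p
      simp only [Set.mem_setOf_eq]
      exact ⟨fun h => ⟨h.1, h.1.2.1, h.2⟩, fun h => ⟨h.1, h.2.2⟩⟩
    have hfr : ∀ s : Finset (ℕ × ℕ × ℕ), ↑s ⊆ Idx q r m →
        Module.finrank k (Submodule.span k (v '' ↑s)) = s.card :=
      fun s hs => finrank_span_image k V hli s hs
    have hsub1 : (↑(idxF m n i r) : Set (ℕ × ℕ × ℕ)) ⊆ Idx q r m := by
      rw [coe_idxF hmn hi2 le_rfl]; exact fun p hp => hp.1
    have hsub2 : (↑(idxF m n q j) : Set (ℕ × ℕ × ℕ)) ⊆ Idx q r m := by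
      rw [coe_idxF hmn le_rfl hj2]; exact fun p hp => hp.1
    have hBi : Module.finrank k (B i) = rk m i r := by
      rw [hBsp i hi2, hBset, hfr _ hsub1, card_idxF hmn]
    have hCj : Module.finrank k (C j) = rk m q j := by
      rw [hCsp j hj2, hCset, hfr _ hsub2, card_idxF hmn]
    have hinter : idxF m n i r ∩ idxF m n q j = idxF m n i j := by
      ext p
      simp only [Finset.mem_inter, mem_idxF]
      constructor
      · rintro ⟨⟨⟨a1, a2⟩, ⟨a3, a4⟩, a5, a6⟩, ⟨b1, b2⟩, ⟨b3, b4⟩, b5, b6⟩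
        exact ⟨⟨a1, a2⟩, ⟨a3, b4⟩, a5, a6⟩
      · rintro ⟨⟨a1, a2⟩, ⟨a3, a4⟩, a5, a6⟩
        exact ⟨⟨⟨a1, a2⟩, ⟨a3, le_trans a4 hj2⟩, a5, a6⟩,
          ⟨a1, le_trans a2 hi2⟩, ⟨a3, a4⟩, a5, a6⟩
    have hsupr : B i ⊔ C j
        = Submodule.span k (v '' ↑(idxF m n i r ∪ idxF m n q j)) := by
      rw [hBsp i hi2, hCsp j hj2, hBset, hCset, Finset.coe_union, Set.image_union,
        Submodule.span_union]
    have hsub3 : (↑(idxF m n i r ∪ idxF m n q j) : Set (ℕ × ℕ × ℕ)) ⊆ Idx q r m := by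
      rw [Finset.coe_union]
      exact Set.union_subset hsub1 hsub2
    have hsup : Module.finrank k ↥(B i ⊔ C j) = (idxF m n i r ∪ idxF m n q j).card := by
      rw [hsupr, hfr _ hsub3]
    have hcards := Finset.card_union_add_card_inter (idxF m n i r) (idxF m n q j)
    rw [hinter, card_idxF hmn, card_idxF hmn, card_idxF hmn] at hcards
    have hkey := Submodule.finrank_sup_add_finrank_inf_eq (B i) (C j)
    rw [hBi, hCj, hsup] at hkey
    omega
  · intro hrk
    have hW : ∀ i j, i ≤ q → j ≤ r →
        Module.finrank k ↥(B i ⊓ C j) = rk m i j := by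
      intro i j hi hj
      rcases Nat.eq_zero_or_pos i with h0 | h1
      · subst h0
        rw [hB0, bot_inf_eq, finrank_bot]
        simp [rk]
      rcases Nat.eq_zero_or_pos j with h0 | h2
      · subst h0
        rw [hC0, inf_bot_eq, finrank_bot]
        simp [rk]
      exact hrk i h1 hi j h2 hj
    have hex : ∀ p : ℕ × ℕ, ∃ u : ℕ → V,
        (1 ≤ p.1 ∧ p.1 ≤ q ∧ 1 ≤ p.2 ∧ p.2 ≤ r) →
        ((∀ t, u t ∈ B p.1 ⊓ C p.2) ∧
          ((B (p.1 - 1) ⊓ C p.2) ⊔ (B p.1 ⊓ C (p.2 - 1))) ⊔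
            Submodule.span k (u '' Set.Icc 1 (m p.1 p.2)) = B p.1 ⊓ C p.2) := by
      rintro ⟨i, j⟩
      by_cases h : 1 ≤ i ∧ i ≤ q ∧ 1 ≤ j ∧ j ≤ r
      · obtain ⟨hi1, hiq, hj1, hjr⟩ := h
        obtain ⟨i', rfl⟩ : ∃ i', i = i' + 1 := ⟨i - 1, by omega⟩
        obtain ⟨j', rfl⟩ : ∃ j', j = j' + 1 := ⟨j - 1, by omega⟩
        have hBle : B i' ≤ B (i' + 1) := by
          have := hBmono (i' + 1) (by omega) hiq
          simpa using this
        have hCle : C j' ≤ C (j' + 1) := by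
          have := hCmono (j' + 1) (by omega) hjr
          simpa using this
        set X := B i' ⊓ C (j' + 1) with hXdef
        set Y := B (i' + 1) ⊓ C j' with hYdef
        have hXY : X ⊓ Y = B i' ⊓ C j' := by
          apply le_antisymm
          · exact le_inf (inf_le_left.trans inf_le_left) (inf_le_right.trans inf_le_right)
          · exact le_inf (le_inf inf_le_left (inf_le_right.trans hCle))
              (le_inf (inf_le_left.trans hBle) inf_le_right)
        have hXW : X ≤ B (i' + 1) ⊓ C (j' + 1) := le_inf (inf_le_left.trans hBle) inf_le_right
        have hYW : Y ≤ B (i' + 1) ⊓ C (j' + 1) := le_inf inf_le_left (inf_le_right.trans hCle)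
        have hfXY := Submodule.finrank_sup_add_finrank_inf_eq X Y
        rw [hXY] at hfXY
        have e1 : Module.finrank k ↥X = rk m i' (j' + 1) := hW i' (j' + 1) (by omega) hjr
        have e2 : Module.finrank k ↥Y = rk m (i' + 1) j' := hW (i' + 1) j' hiq (by omega)
        have e3 : Module.finrank k ↥(B i' ⊓ C j') = rk m i' j' := hW i' j' (by omega) (by omega)
        have eW : Module.finrank k ↥(B (i' + 1) ⊓ C (j' + 1)) = rk m (i' + 1) (j' + 1) :=
          hW (i' + 1) (j' + 1) hiq hjr
        have harith := rk_rect m i' j'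
        have hd : Module.finrank k ↥(X ⊔ Y) + m (i' + 1) (j' + 1)
            = Module.finrank k ↥(B (i' + 1) ⊓ C (j' + 1)) := by omega
        obtain ⟨u, hu1, hu2⟩ := exists_compl_span k V (X ⊔ Y) (B (i' + 1) ⊓ C (j' + 1))
          (sup_le hXW hYW) _ hd
        refine ⟨u, fun _ => ⟨hu1, ?_⟩⟩
        simpa only [Nat.add_sub_cancel, ← hXdef, ← hYdef] using hu2
      · exact ⟨fun _ => 0, fun hcond => absurd hcond h⟩
    choose uu huu using hex
    set v : ℕ × ℕ × ℕ → V := fun p => uu (p.1, p.2.1) p.2.2 with hvdef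
    have key : ∀ i, ∀ j, i ≤ q → j ≤ r →
        Submodule.span k (v '' {p | p ∈ Idx q r m ∧ p.1 ≤ i ∧ p.2.1 ≤ j}) = B i ⊓ C j := by
      intro i
      induction i with
      | zero =>
        intro j _ _
        have hempty : {p | p ∈ Idx q r m ∧ p.1 ≤ 0 ∧ p.2.1 ≤ j} = (∅ : Set (ℕ × ℕ × ℕ)) := by
          ext p
          simp only [Set.mem_setOf_eq, Set.mem_empty_iff_false, iff_false, not_and, Idx]
          intro hp
          omega
        rw [hempty, Set.image_empty, Submodule.span_empty, hB0, bot_inf_eq]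
      | succ i ih =>
        intro j
        induction j with
        | zero =>
          intro _ _
          have hempty : {p | p ∈ Idx q r m ∧ p.1 ≤ i + 1 ∧ p.2.1 ≤ 0}
              = (∅ : Set (ℕ × ℕ × ℕ)) := by
            ext p
            simp only [Set.mem_setOf_eq, Set.mem_empty_iff_false, iff_false, not_and, Idx]
            intro hp
            omega
          rw [hempty, Set.image_empty, Submodule.span_empty, hC0, inf_bot_eq]
        | succ j ihj =>
          intro hi hj
          have hdec : {p | p ∈ Idx q r m ∧ p.1 ≤ i + 1 ∧ p.2.1 ≤ j + 1}
              = {p | p ∈ Idx q r m ∧ p.1 ≤ i ∧ p.2.1 ≤ j + 1}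
              ∪ ({p | p ∈ Idx q r m ∧ p.1 ≤ i + 1 ∧ p.2.1 ≤ j}
              ∪ {p | p ∈ Idx q r m ∧ p.1 = i + 1 ∧ p.2.1 = j + 1}) := by
            ext p
            simp only [Set.mem_union, Set.mem_setOf_eq]
            constructor
            · rintro ⟨hp, h1, h2⟩
              rcases Nat.lt_or_ge p.1 (i + 1) with h | h
              · exact Or.inl ⟨hp, by omega, h2⟩
              rcases Nat.lt_or_ge p.2.1 (j + 1) with h' | h'
              · exact Or.inr (Or.inl ⟨hp, h1, by omega⟩)
              · exact Or.inr (Or.inr ⟨hp, by omega, by omega⟩)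
            · rintro (⟨hp, h1, h2⟩ | ⟨hp, h1, h2⟩ | ⟨hp, h1, h2⟩) <;>
                exact ⟨hp, by omega, by omega⟩
          have hE : v '' {p | p ∈ Idx q r m ∧ p.1 = i + 1 ∧ p.2.1 = j + 1}
              = uu (i + 1, j + 1) '' Set.Icc 1 (m (i + 1) (j + 1)) := by
            ext x
            constructor
            · rintro ⟨⟨a, bb, cc⟩, ⟨hp, h1, h2⟩, rfl⟩
              simp only at h1 h2
              subst h1; subst h2
              simp only [Idx, Set.mem_setOf_eq] at hp
              exact ⟨cc, Set.mem_Icc.mpr ⟨hp.2.2.2.2.1, hp.2.2.2.2.2⟩, rfl⟩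
            · rintro ⟨t, ht, rfl⟩
              rw [Set.mem_Icc] at ht
              refine ⟨(i + 1, j + 1, t), ⟨?_, rfl, rfl⟩, rfl⟩
              simp only [Idx, Set.mem_setOf_eq]
              exact ⟨by omega, hi, by omega, hj, ht.1, ht.2⟩
          obtain ⟨hu1, hu2⟩ := huu (i + 1, j + 1) ⟨by omega, hi, by omega, hj⟩
          rw [hdec, Set.image_union, Set.image_union, Submodule.span_union,
            Submodule.span_union, ih (j + 1) (by omega) hj, ihj hi (by omega), hE,
            ← sup_assoc]
          simpa only [Nat.add_sub_cancel] using hu2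
    have hIdxEq : Idx q r m = {p | p ∈ Idx q r m ∧ p.1 ≤ q ∧ p.2.1 ≤ r} :=
      Set.ext fun p => ⟨fun hp => ⟨hp, hp.2.1, hp.2.2.2.1⟩, fun h => h.1⟩
    have hspTop : Submodule.span k (v '' Idx q r m) = ⊤ := by
      rw [hIdxEq, key q r le_rfl le_rfl, hBtop, hCtop, top_inf_eq]
    have hIdxF : (↑(idxF m n q r) : Set (ℕ × ℕ × ℕ)) = Idx q r m := by
      rw [coe_idxF hmn le_rfl le_rfl]
      exact hIdxEq.symm
    have hcard : (idxF m n q r).card = n := by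
      rw [card_idxF hmn, rk]
      rw [Finset.sum_congr rfl (fun a ha => hmrow a ha)]
      exact hb.2
    have hli' : LinearIndependent k (fun x : (↑(idxF m n q r) : Set (ℕ × ℕ × ℕ)) => v x.1) := by
      apply linearIndependent_of_top_le_span_of_card_eq_finrank
      · rw [← Set.image_eq_range, hIdxF, hspTop]
      · simp [hcard, hdim]
    refine ⟨v, ⟨hIdxF ▸ hli', hspTop⟩, ?_, ?_⟩
    · intro i hi
      have hset : {p | p ∈ Idx q r m ∧ p.1 ≤ i}
          = {p | p ∈ Idx q r m ∧ p.1 ≤ i ∧ p.2.1 ≤ r} :=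
        Set.ext fun p => ⟨fun h => ⟨h.1, h.2, h.1.2.2.2.1⟩, fun h => ⟨h.1, h.2.1⟩⟩
      rw [hset, key i r hi le_rfl, hCtop, inf_top_eq]
    · intro j hj
      have hset : {p | p ∈ Idx q r m ∧ p.2.1 ≤ j}
          = {p | p ∈ Idx q r m ∧ p.1 ≤ q ∧ p.2.1 ≤ j} :=
        Set.ext fun p => ⟨fun h => ⟨h.1, h.1.2.1, h.2⟩, fun h => ⟨h.1, h.2.2⟩⟩
      rw [hset, key q j le_rfl hj, hBtop, top_inf_eq]

end TwoFlagsLine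
end

section
/- (Uncircling Lemma) Let M be a transport matrix and S a nonempty set of matrix positions with m_{ij} > 0 for all (i,j) ∈ S. Let {v_{ijk}} be a basis of V indexed by M, define B_i = span{v_{i'jk} : i'≤i}, C_j = span{v_{ij'k} : j'≤j}, and A = span(Σ_{(i,j)∈S} v_{ij1}). Then (A, B_•, C_•) ∈ F_{M,[S]}, where [S] is the set of ≤-maximal elements of S. -/
open Finset

namespace TwoFlagsLine

private lemma span_congr_aux {k V : Type*} [Field k] [AddCommGroup V] [Module k V]
    (v v' : ℕ × ℕ × ℕ → V) (I : Set (ℕ × ℕ × ℕ)) (P : ℕ × ℕ × ℕ → Prop)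
    (D : Finset (ℕ × ℕ)) (T : ℕ × ℕ → Finset (ℕ × ℕ))
    (hT : ∀ d ∈ D, ∀ p ∈ T d, (p.1, p.2, 1) ∈ I ∧ (p.1, p.2) ∉ D ∧ p ≤ d)
    (hP : ∀ (p d : ℕ × ℕ), p ≤ d → P (d.1, d.2, 1) → P (p.1, p.2, 1))
    (hmod : ∀ x, ¬(x.2.2 = 1 ∧ (x.1, x.2.1) ∈ D) → v' x = v x)
    (hmodd : ∀ d ∈ D, v' (d.1, d.2, 1) = v (d.1, d.2, 1) + ∑ p ∈ T d, v (p.1, p.2, 1)) :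
    Submodule.span k (v' '' {x | x ∈ I ∧ P x}) = Submodule.span k (v '' {x | x ∈ I ∧ P x}) := by
  refine le_antisymm (Submodule.span_le.2 ?_) (Submodule.span_le.2 ?_) <;>
    rintro _ ⟨⟨i, j, t⟩, ⟨hxI, hxP⟩, rfl⟩
  · by_cases h : t = 1 ∧ (i, j) ∈ D
    · obtain ⟨rfl, hD⟩ := h
      rw [hmodd (i, j) hD]
      refine Submodule.add_mem _ (Submodule.subset_span ⟨(i, j, 1), ⟨hxI, hxP⟩, rfl⟩)
        (Submodule.sum_mem _ fun p hp => Submodule.subset_span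
          ⟨(p.1, p.2, 1), ⟨(hT _ hD p hp).1, hP p (i, j) (hT _ hD p hp).2.2 hxP⟩, rfl⟩)
    · rw [hmod _ h]
      exact Submodule.subset_span ⟨(i, j, t), ⟨hxI, hxP⟩, rfl⟩
  · by_cases h : t = 1 ∧ (i, j) ∈ D
    · obtain ⟨rfl, hD⟩ := h
      have h2 : ∑ p ∈ T (i, j), v (p.1, p.2, 1) = ∑ p ∈ T (i, j), v' (p.1, p.2, 1) :=
        Finset.sum_congr rfl fun p hp =>
          (hmod _ (by simp [(hT _ hD p hp).2.1])).symm
      have key : v (i, j, 1) = v' (i, j, 1) - ∑ p ∈ T (i, j), v' (p.1, p.2, 1) := by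
        rw [hmodd (i, j) hD, h2]; abel
      rw [key]
      refine Submodule.sub_mem _ (Submodule.subset_span ⟨(i, j, 1), ⟨hxI, hxP⟩, rfl⟩)
        (Submodule.sum_mem _ fun p hp => Submodule.subset_span
          ⟨(p.1, p.2, 1), ⟨(hT _ hD p hp).1, hP p (i, j) (hT _ hD p hp).2.2 hxP⟩, rfl⟩)
    · rw [← hmod _ h]
      exact Submodule.subset_span ⟨(i, j, t), ⟨hxI, hxP⟩, rfl⟩

variable (k V : Type*) [Field k] [AddCommGroup V] [Module k V]

/-- Uncircling Lemma: if `S` is a nonempty set of positions with positive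
entries of a transport matrix `M`, `v` is a basis indexed by `M`, the flags `B, C` are
defined from `v` as usual and `A = span(Σ_{(i,j) ∈ S} v_{ij1})`, then
`(A, B, C) ∈ F_{M,[S]}` where `[S]` is the set of `≤`-maximal elements of `S`. -/
theorem uncircling (n q r : ℕ) (hn : 0 < n) (hq : 0 < q) (hr : 0 < r)
    (b c : ℕ → ℕ) (hb : IsComposition n q b) (hc : IsComposition n r c)
    {k V : Type*} [Field k] [Infinite k] [AddCommGroup V] [Module k V]
    [FiniteDimensional k V] (hdim : Module.finrank k V = n)
    (m : ℕ → ℕ → ℕ) (hm : IsTransport q r b c m)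
    (S : Finset (ℕ × ℕ)) (hS : S.Nonempty)
    (hSpos : ∀ p ∈ S, 1 ≤ p.1 ∧ p.1 ≤ q ∧ 1 ≤ p.2 ∧ p.2 ≤ r ∧ 0 < m p.1 p.2)
    (v : ℕ × ℕ × ℕ → V) (hv : IsMBasis k V q r m v)
    (A : Submodule k V) (B C : ℕ → Submodule k V)
    (hA : A = Submodule.span k {∑ p ∈ S, v (p.1, p.2, 1)})
    (hB : ∀ i ≤ q, B i = Submodule.span k (v '' {p | p ∈ Idx q r m ∧ p.1 ≤ i}))
    (hC : ∀ j ≤ r, C j = Submodule.span k (v '' {p | p ∈ Idx q r m ∧ p.2.1 ≤ j})) :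
    InOrbitDec k V q r m (maxl S) A B C := by
  classical
  have hmaxl : ∀ p : ℕ × ℕ, ∃ d : ℕ × ℕ, p ∈ S → d ∈ maxl S ∧ p ≤ d := by
    intro p
    by_cases hp : p ∈ S
    · obtain ⟨d, hd, hdmax⟩ := Finset.exists_max_image (S.filter fun p' => p ≤ p')
        (fun p' => p'.1 + p'.2) ⟨p, by simp [hp]⟩
      simp only [Finset.mem_filter] at hd
      refine ⟨d, fun _ => ⟨?_, hd.2⟩⟩
      simp only [maxl, Finset.mem_filter]
      refine ⟨hd.1, fun p' hp' hle => ?_⟩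
      have h1 := hdmax p' (by simp only [Finset.mem_filter]; exact ⟨hp', le_trans hd.2 hle⟩)
      have h2 := hle.1
      have h3 := hle.2
      exact Prod.ext (by omega) (by omega)
    · exact ⟨p, fun h => absurd h hp⟩
  choose f hf using hmaxl
  have hDS : maxl S ⊆ S := Finset.filter_subset _ _
  set T : ℕ × ℕ → Finset (ℕ × ℕ) := fun d => (S \ maxl S).filter fun p => f p = d with hTdef
  set v' : ℕ × ℕ × ℕ → V := fun x =>
    if x.2.2 = 1 ∧ (x.1, x.2.1) ∈ maxl S then
      v x + ∑ p ∈ T (x.1, x.2.1), v (p.1, p.2, 1)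
    else v x with hv'def
  have hIdxS : ∀ p ∈ S, ((p.1 : ℕ), p.2, 1) ∈ Idx q r m := by
    intro p hp
    obtain ⟨h1, h2, h3, h4, h5⟩ := hSpos p hp
    exact ⟨h1, h2, h3, h4, le_refl 1, h5⟩
  have hmod : ∀ x, ¬(x.2.2 = 1 ∧ (x.1, x.2.1) ∈ maxl S) → v' x = v x := by
    intro x hx
    simp only [hv'def, if_neg hx]
  have hmodd : ∀ d ∈ maxl S, v' (d.1, d.2, 1) = v (d.1, d.2, 1) + ∑ p ∈ T d, v (p.1, p.2, 1) := by
    intro d hd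
    simp only [hv'def]
    rw [if_pos ⟨trivial, hd⟩]
  have hTfact : ∀ d ∈ maxl S, ∀ p ∈ T d,
      ((p.1 : ℕ), p.2, 1) ∈ Idx q r m ∧ ((p.1 : ℕ), p.2) ∉ maxl S ∧ p ≤ d := by
    intro d hd p hp
    rw [hTdef, Finset.mem_filter, Finset.mem_sdiff] at hp
    obtain ⟨⟨hpS, hpD⟩, hfp⟩ := hp
    refine ⟨hIdxS p hpS, hpD, ?_⟩
    rw [← hfp]
    exact (hf p hpS).2
  have hspan : ∀ P : ℕ × ℕ × ℕ → Prop,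
      (∀ (p d : ℕ × ℕ), p ≤ d → P (d.1, d.2, 1) → P (p.1, p.2, 1)) →
      Submodule.span k (v' '' {x | x ∈ Idx q r m ∧ P x}) =
        Submodule.span k (v '' {x | x ∈ Idx q r m ∧ P x}) :=
    fun P hP => span_congr_aux v v' _ P (maxl S) T hTfact hP hmod hmodd
  obtain ⟨hli, hsp⟩ := hv
  have htop : Submodule.span k (v' '' Idx q r m) = ⊤ := by
    have h := hspan (fun _ => True) (by intro _ _ _ _; trivial)
    simp only [and_true, Set.setOf_mem_eq] at h
    rw [h, hsp]
  let e : Module.Basis (Idx q r m) k V := Module.Basis.mk hli (by rw [← Set.image_eq_range]; exact hsp.ge)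
  haveI : Fintype (Idx q r m) := FiniteDimensional.fintypeBasisIndex e
  have hcard : Fintype.card (Idx q r m) = Module.finrank k V :=
    (Module.finrank_eq_card_basis e).symm
  have hli' : LinearIndependent k (fun x : Idx q r m => v' x.1) := by
    apply linearIndependent_of_top_le_span_of_card_eq_finrank
    · rw [← Set.image_eq_range, htop]
    · exact hcard
  refine ⟨v', ⟨hli', htop⟩, ?_, ?_, ?_⟩
  · intro i hi
    rw [hB i hi]
    exact (hspan (fun x => x.1 ≤ i) (fun p d hpd hd => le_trans hpd.1 hd)).symm
  · intro j hj
    rw [hC j hj]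
    exact (hspan (fun x => x.2.1 ≤ j) (fun p d hpd hd => le_trans hpd.2 hd)).symm
  · rw [hA]
    have hsum : ∑ p ∈ maxl S, v' (p.1, p.2, 1) = ∑ p ∈ S, v (p.1, p.2, 1) := by
      calc ∑ p ∈ maxl S, v' (p.1, p.2, 1)
          = ∑ p ∈ maxl S, (v (p.1, p.2, 1) + ∑ x ∈ T p, v (x.1, x.2, 1)) :=
            Finset.sum_congr rfl fun d hd => hmodd d hd
        _ = ∑ p ∈ maxl S, v (p.1, p.2, 1) + ∑ p ∈ maxl S, ∑ x ∈ T p, v (x.1, x.2, 1) :=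
            Finset.sum_add_distrib
        _ = ∑ p ∈ maxl S, v (p.1, p.2, 1) + ∑ x ∈ S \ maxl S, v (x.1, x.2, 1) := by
            congr 1
            exact Finset.sum_fiberwise_of_maps_to
              (fun x hx => (hf x (Finset.mem_sdiff.1 hx).1).1) _
        _ = ∑ p ∈ S, v (p.1, p.2, 1) := by
            rw [add_comm]; exact Finset.sum_sdiff hDS
    rw [hsum]


end TwoFlagsLine
end

section
/- Let M and M' be transport matrices with M ≤_rk M' and M ≠ M'. Then there exist a rectangle R and a transport matrix M̃ such that M →_R M̃ is a simple move and M̃ ≤_rk M'. -/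
open Finset

namespace TwoFlagsLine

/-- The matrix `M - E_{i0 j0} - E_{i1 j1} + E_{i0 j1} + E_{i1 j0}`. -/
def moveMat (m : ℕ → ℕ → ℕ) (i0 j0 i1 j1 : ℕ) : ℕ → ℕ → ℕ :=
  fun i j =>
    if (i, j) = (i0, j0) ∨ (i, j) = (i1, j1) then m i j - 1
    else if (i, j) = (i0, j1) ∨ (i, j) = (i1, j0) then m i j + 1
    else m i j

/-- The simple move `M →_R M'` at the rectangle `R = [i0,i1] × [j0,j1]`. -/
def IsSimpleMoveAt (m m' : ℕ → ℕ → ℕ) (i0 j0 i1 j1 : ℕ) : Prop :=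
  i0 < i1 ∧ j0 < j1 ∧ 0 < m i0 j0 ∧ 0 < m i1 j1 ∧
  (∀ i j : ℕ, i0 ≤ i → i ≤ i1 → j0 ≤ j → j ≤ j1 →
    (i, j) ≠ (i0, j0) → (i, j) ≠ (i1, j1) → (i, j) ≠ (i0, j1) → (i, j) ≠ (i1, j0) →
    m i j = 0) ∧
  m' = moveMat m i0 j0 i1 j1

/-- Rank order `M ≤rk M'` : `r_{ij}(M) ≥ r_{ij}(M')` for all `(i,j) ∈ [0,q] × [0,r]`. -/
def RkLE (q r : ℕ) (m m' : ℕ → ℕ → ℕ) : Prop :=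
  ∀ i ≤ q, ∀ j ≤ r, rk m' i j ≤ rk m i j

/-- A single simple move at some rectangle inside the matrix. -/
def MoveRel (q r : ℕ) (m m' : ℕ → ℕ → ℕ) : Prop :=
  ∃ i0 j0 i1 j1 : ℕ, 1 ≤ i0 ∧ i1 ≤ q ∧ 1 ≤ j0 ∧ j1 ≤ r ∧
    IsSimpleMoveAt m m' i0 j0 i1 j1

/-- Move order: reflexive–transitive closure of simple moves. -/
def MoveLE (q r : ℕ) (m m' : ℕ → ℕ → ℕ) : Prop :=
  Relation.ReflTransGen (MoveRel q r) m m'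

/-- `(i,j) ≤ Δ` : some element of `Δ` lies weakly southeast of `p`. -/
def Below (p : ℕ × ℕ) (Δ : Finset (ℕ × ℕ)) : Prop := ∃ p' ∈ Δ, p ≤ p'

/-- Decorated rank numbers `r̄_{ij}(M,Δ) = r_{ij}(M) + δ_{ij}(Δ)`. -/
def rkBar (m : ℕ → ℕ → ℕ) (Δ : Finset (ℕ × ℕ)) (i j : ℕ) : ℕ :=
  rk m i j + deltaNum Δ i j

/-- Decorated rank order `(M,Δ) ≤rk (M',Δ')`. -/
def DecRkLE (q r : ℕ) (m : ℕ → ℕ → ℕ) (Δ : Finset (ℕ × ℕ))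
    (m' : ℕ → ℕ → ℕ) (Δ' : Finset (ℕ × ℕ)) : Prop :=
  ∀ i ≤ q, ∀ j ≤ r, rk m' i j ≤ rk m i j ∧ rkBar m' Δ' i j ≤ rkBar m Δ i j

/-- Simple move (i). -/
def MoveI (m : ℕ → ℕ → ℕ) (Δ : Finset (ℕ × ℕ))
    (m' : ℕ → ℕ → ℕ) (Δ' : Finset (ℕ × ℕ)) : Prop :=
  ∃ i1 j1 : ℕ, ¬ Below (i1, j1) Δ ∧ 0 < m i1 j1 ∧
    (∀ i j : ℕ, ((i, j) : ℕ × ℕ) < (i1, j1) → ¬ Below (i, j) Δ → m i j = 0) ∧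
    m' = m ∧ Δ' = maxl (Δ ∪ {(i1, j1)})

/-- Simple move (ii). -/
def MoveII (m : ℕ → ℕ → ℕ) (Δ : Finset (ℕ × ℕ))
    (m' : ℕ → ℕ → ℕ) (Δ' : Finset (ℕ × ℕ)) : Prop :=
  ∃ i0 j0 i1 j1 : ℕ, i0 < i1 ∧ j0 < j1 ∧ 0 < m i0 j0 ∧ 0 < m i1 j1 ∧
    (∀ i j : ℕ, ((i0, j0) : ℕ × ℕ) < (i, j) → ((i, j) : ℕ × ℕ) < (i1, j1) →
      (i, j) ≠ (i0, j1) → (i, j) ≠ (i1, j0) → m i j = 0) ∧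
    (i1, j1) ∉ Δ ∧ ¬((i0, j1) ∈ Δ ∧ (i1, j0) ∈ Δ) ∧
    ((i0, j0) ∉ Δ ∨ 1 < m i0 j0) ∧
    m' = moveMat m i0 j0 i1 j1 ∧ Δ' = Δ

/-- Simple move (iii)(a). -/
def MoveIIIa (m : ℕ → ℕ → ℕ) (Δ : Finset (ℕ × ℕ))
    (m' : ℕ → ℕ → ℕ) (Δ' : Finset (ℕ × ℕ)) : Prop :=
  ∃ i0 j0 i1 j1 : ℕ, i0 < i1 ∧ j0 < j1 ∧ (i0, j0) ∈ Δ ∧ m i0 j0 = 1 ∧ 0 < m i1 j1 ∧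
    (∀ i j : ℕ, ((i0, j0) : ℕ × ℕ) < (i, j) → ((i, j) : ℕ × ℕ) < (i1, j1) →
      (i, j) ≠ (i1, j0) → m i j = 0) ∧
    (∀ i j : ℕ, ((i, j) : ℕ × ℕ) ≤ (i0, j1) → ¬ Below (i, j) Δ → m i j = 0) ∧
    m' = moveMat m i0 j0 i1 j1 ∧ Δ' = maxl (Δ ∪ {(i0, j1)})

/-- Simple move (iii)(b). -/
def MoveIIIb (m : ℕ → ℕ → ℕ) (Δ : Finset (ℕ × ℕ))
    (m' : ℕ → ℕ → ℕ) (Δ' : Finset (ℕ × ℕ)) : Prop :=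
  ∃ i0 j0 i1 j1 : ℕ, i0 < i1 ∧ j0 < j1 ∧ (i0, j0) ∈ Δ ∧ m i0 j0 = 1 ∧ 0 < m i1 j1 ∧
    (∀ i j : ℕ, ((i0, j0) : ℕ × ℕ) < (i, j) → ((i, j) : ℕ × ℕ) < (i1, j1) →
      (i, j) ≠ (i0, j1) → m i j = 0) ∧
    (∀ i j : ℕ, ((i, j) : ℕ × ℕ) ≤ (i1, j0) → ¬ Below (i, j) Δ → m i j = 0) ∧
    m' = moveMat m i0 j0 i1 j1 ∧ Δ' = maxl (Δ ∪ {(i1, j0)})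

/-- Simple move (iv)(a). -/
def MoveIVa (m : ℕ → ℕ → ℕ) (Δ : Finset (ℕ × ℕ))
    (m' : ℕ → ℕ → ℕ) (Δ' : Finset (ℕ × ℕ)) : Prop :=
  ∃ i0 i2 i1 j2 j0 j1 : ℕ, i0 < i2 ∧ i2 < i1 ∧ j2 < j0 ∧ j0 < j1 ∧
    (i0, j0) ∈ Δ ∧ (i2, j2) ∈ Δ ∧ m i0 j0 = 1 ∧ m i2 j2 = 1 ∧ 0 < m i1 j1 ∧
    (∀ i j : ℕ, ((i0, j2) : ℕ × ℕ) < (i, j) → ((i, j) : ℕ × ℕ) < (i1, j1) →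
      ¬ Below (i, j) Δ → (i, j) ≠ (i0, j1) → (i, j) ≠ (i1, j2) → m i j = 0) ∧
    m' = (fun i j =>
      if (i, j) = (i0, j0) ∨ (i, j) = (i1, j1) ∨ (i, j) = (i2, j2) then m i j - 1
      else if (i, j) = (i1, j2) ∨ (i, j) = (i2, j0) ∨ (i, j) = (i0, j1) then m i j + 1
      else m i j) ∧
    Δ' = maxl (Δ ∪ {(i2, j0)})

/-- Simple move (iv)(b). -/
def MoveIVb (m : ℕ → ℕ → ℕ) (Δ : Finset (ℕ × ℕ))
    (m' : ℕ → ℕ → ℕ) (Δ' : Finset (ℕ × ℕ)) : Prop :=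
  ∃ i0 i2 i1 j0 j1 : ℕ, i0 < i2 ∧ i2 < i1 ∧ j0 < j1 ∧
    0 < m i0 j0 ∧ 0 < m i1 j1 ∧ (i2, j0) ∈ Δ ∧ m i2 j0 = 1 ∧ ¬ Below (i0, j1) Δ ∧
    (∀ i j : ℕ, ((i0, j0) : ℕ × ℕ) < (i, j) → ((i, j) : ℕ × ℕ) < (i1, j1) →
      (i, j) ≠ (i0, j1) → (i, j) ≠ (i1, j0) → (i, j) ≠ (i2, j0) → m i j = 0) ∧
    m' = moveMat m i0 j0 i1 j1 ∧ Δ' = Δ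

/-- Simple move (iv)(c). -/
def MoveIVc (m : ℕ → ℕ → ℕ) (Δ : Finset (ℕ × ℕ))
    (m' : ℕ → ℕ → ℕ) (Δ' : Finset (ℕ × ℕ)) : Prop :=
  ∃ i0 i1 j0 j2 j1 : ℕ, i0 < i1 ∧ j0 < j2 ∧ j2 < j1 ∧
    0 < m i0 j0 ∧ 0 < m i1 j1 ∧ (i0, j2) ∈ Δ ∧ m i0 j2 = 1 ∧ ¬ Below (i1, j0) Δ ∧
    (∀ i j : ℕ, ((i0, j0) : ℕ × ℕ) < (i, j) → ((i, j) : ℕ × ℕ) < (i1, j1) →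
      (i, j) ≠ (i0, j1) → (i, j) ≠ (i1, j0) → (i, j) ≠ (i0, j2) → m i j = 0) ∧
    m' = moveMat m i0 j0 i1 j1 ∧ Δ' = Δ

/-- Simple move (v), with circled positions `(I 1, J 1), …, (I t, J t)` and
`(i0, j0) = (I 0, J 0)`. -/
def MoveV (m : ℕ → ℕ → ℕ) (Δ : Finset (ℕ × ℕ))
    (m' : ℕ → ℕ → ℕ) (Δ' : Finset (ℕ × ℕ)) : Prop :=
  ∃ (t : ℕ) (I J : ℕ → ℕ), 1 ≤ t ∧
    (∀ s : ℕ, 1 ≤ s → s ≤ t → I (s - 1) < I s) ∧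
    (∀ s : ℕ, 1 ≤ s → s < t → J (s + 1) < J s) ∧
    J 0 < J t ∧
    (∀ s : ℕ, 1 ≤ s → s ≤ t → (I s, J s) ∈ Δ) ∧
    0 < m (I 0) (J 0) ∧
    (∀ i j s : ℕ, 1 ≤ s → s ≤ t →
      ((I 0, J 0) : ℕ × ℕ) < (i, j) → i ≤ I s - 1 → j ≤ J s - 1 → m i j = 0) ∧
    m' = (fun i j =>
      if (i, j) = (I 0, J 1) ∨ (i, j) = (I t, J 0) then m i j + 1
      else if (i, j) ∈ (Finset.range (t + 1)).image (fun s => (I s, J s)) then m i j - 1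
      else m i j) ∧
    Δ' = (Δ \ (Finset.range (t + 1)).image (fun s => (I s, J s))) ∪ {(I 0, J 1), (I t, J 0)}

/-- One of the simple moves (i)–(v) on decorated matrices. -/
def MoveRelDec (m : ℕ → ℕ → ℕ) (Δ : Finset (ℕ × ℕ))
    (m' : ℕ → ℕ → ℕ) (Δ' : Finset (ℕ × ℕ)) : Prop :=
  MoveI m Δ m' Δ' ∨ MoveII m Δ m' Δ' ∨ MoveIIIa m Δ m' Δ' ∨ MoveIIIb m Δ m' Δ' ∨
  MoveIVa m Δ m' Δ' ∨ MoveIVb m Δ m' Δ' ∨ MoveIVc m Δ m' Δ' ∨ MoveV m Δ m' Δ'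

/-- Decorated move order: reflexive–transitive closure of the simple moves (i)–(v). -/
def DecMoveLE (m : ℕ → ℕ → ℕ) (Δ : Finset (ℕ × ℕ))
    (m' : ℕ → ℕ → ℕ) (Δ' : Finset (ℕ × ℕ)) : Prop :=
  Relation.ReflTransGen
    (fun x y : (ℕ → ℕ → ℕ) × Finset (ℕ × ℕ) => MoveRelDec x.1 x.2 y.1 y.2) (m, Δ) (m', Δ')

lemma Icc_one_eq_Ioc (n : ℕ) : Finset.Icc 1 n = Finset.Ioc 0 n := by
  ext x; simp only [Finset.mem_Icc, Finset.mem_Ioc]; omega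

lemma rk_add_mass (m : ℕ → ℕ → ℕ) {i i' j j' : ℕ} (hi : i ≤ i') (hj : j ≤ j') :
    rk m i' j' + rk m i j = rk m i j' + rk m i' j
      + ∑ k ∈ Finset.Ioc i i', ∑ l ∈ Finset.Ioc j j', m k l := by
  have hsplit : ∀ (f : ℕ → ℕ) (a b : ℕ), a ≤ b →
      ∑ x ∈ Finset.Icc 1 b, f x = ∑ x ∈ Finset.Icc 1 a, f x + ∑ x ∈ Finset.Ioc a b, f x := by
    intro f a b hab
    rw [Icc_one_eq_Ioc, Icc_one_eq_Ioc, Finset.sum_Ioc_consecutive _ (Nat.zero_le a) hab]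
  have E1 : rk m i' j' = rk m i j' + ∑ k ∈ Finset.Ioc i i', ∑ l ∈ Finset.Icc 1 j', m k l := by
    unfold rk; exact hsplit _ i i' hi
  have E2 : rk m i' j = rk m i j + ∑ k ∈ Finset.Ioc i i', ∑ l ∈ Finset.Icc 1 j, m k l := by
    unfold rk; exact hsplit _ i i' hi
  have E3 : ∑ k ∈ Finset.Ioc i i', ∑ l ∈ Finset.Icc 1 j', m k l
      = ∑ k ∈ Finset.Ioc i i', ∑ l ∈ Finset.Icc 1 j, m k l
        + ∑ k ∈ Finset.Ioc i i', ∑ l ∈ Finset.Ioc j j', m k l := by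
    rw [← Finset.sum_add_distrib]
    exact Finset.sum_congr rfl fun k _ => hsplit _ j j' hj
  omega

lemma sum_ind_right (s : Finset ℕ) (P : Prop) [Decidable P] (b : ℕ) :
    ∑ l ∈ s, (if P ∧ l = b then (1:ℕ) else 0) = if P ∧ b ∈ s then 1 else 0 := by
  by_cases hP : P
  · simp only [hP, true_and]
    exact Finset.sum_ite_eq' s b fun _ => (1:ℕ)
  · simp [hP]

lemma sum_ind_left (s : Finset ℕ) (P : Prop) [Decidable P] (a : ℕ) :
    ∑ k ∈ s, (if k = a ∧ P then (1:ℕ) else 0) = if a ∈ s ∧ P then 1 else 0 := by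
  simp only [and_comm (b := P)]
  exact sum_ind_right s P a

lemma sum_pair_ind (i j a b : ℕ) :
    ∑ k ∈ Finset.Icc 1 i, ∑ l ∈ Finset.Icc 1 j, (if (k, l) = (a, b) then (1:ℕ) else 0)
      = if (a ∈ Finset.Icc 1 i ∧ b ∈ Finset.Icc 1 j) then 1 else 0 := by
  simp only [Prod.mk.injEq]
  rw [Finset.sum_congr rfl fun k _ => sum_ind_right (Finset.Icc 1 j) (k = a) b]
  exact sum_ind_left (Finset.Icc 1 i) (b ∈ Finset.Icc 1 j) a

lemma sum_row_ind (r i a b : ℕ) :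
    ∑ l ∈ Finset.Icc 1 r, (if ((i, l) : ℕ × ℕ) = (a, b) then (1:ℕ) else 0)
      = if i = a ∧ b ∈ Finset.Icc 1 r then 1 else 0 := by
  simp only [Prod.mk.injEq]
  exact sum_ind_right _ _ _

lemma sum_col_ind (q j a b : ℕ) :
    ∑ k ∈ Finset.Icc 1 q, (if ((k, j) : ℕ × ℕ) = (a, b) then (1:ℕ) else 0)
      = if a ∈ Finset.Icc 1 q ∧ j = b then 1 else 0 := by
  simp only [Prod.mk.injEq]
  exact sum_ind_left _ _ _

lemma moveMat_pw (m : ℕ → ℕ → ℕ) (a0 b0 a1 b1 : ℕ) (ha : a0 ≠ a1) (hb : b0 ≠ b1)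
    (h0 : 0 < m a0 b0) (h1 : 0 < m a1 b1) (k l : ℕ) :
    moveMat m a0 b0 a1 b1 k l
      + ((if ((k, l) : ℕ × ℕ) = (a0, b0) then 1 else 0) + (if ((k, l) : ℕ × ℕ) = (a1, b1) then 1 else 0))
    = m k l
      + ((if ((k, l) : ℕ × ℕ) = (a0, b1) then 1 else 0) + (if ((k, l) : ℕ × ℕ) = (a1, b0) then 1 else 0)) := by
  unfold moveMat
  rcases eq_or_ne k a0 with rfl | e1 <;> rcases eq_or_ne l b0 with rfl | e3 <;>
    rcases eq_or_ne k a1 with rfl | e2 <;> rcases eq_or_ne l b1 with rfl | e4 <;>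
    simp_all [Prod.mk.injEq] <;> omega

lemma rk_moveMat (m : ℕ → ℕ → ℕ) (a0 b0 a1 b1 : ℕ) (ha : a0 ≠ a1) (hb : b0 ≠ b1)
    (h0 : 0 < m a0 b0) (h1 : 0 < m a1 b1) (i j : ℕ) :
    rk (moveMat m a0 b0 a1 b1) i j
      + ((if a0 ∈ Finset.Icc 1 i ∧ b0 ∈ Finset.Icc 1 j then 1 else 0)
        + (if a1 ∈ Finset.Icc 1 i ∧ b1 ∈ Finset.Icc 1 j then 1 else 0))
    = rk m i j
      + ((if a0 ∈ Finset.Icc 1 i ∧ b1 ∈ Finset.Icc 1 j then 1 else 0)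
        + (if a1 ∈ Finset.Icc 1 i ∧ b0 ∈ Finset.Icc 1 j then 1 else 0)) := by
  have hsum : ∑ k ∈ Finset.Icc 1 i, ∑ l ∈ Finset.Icc 1 j,
      (moveMat m a0 b0 a1 b1 k l
        + ((if ((k, l) : ℕ × ℕ) = (a0, b0) then 1 else 0) + (if ((k, l) : ℕ × ℕ) = (a1, b1) then 1 else 0)))
      = ∑ k ∈ Finset.Icc 1 i, ∑ l ∈ Finset.Icc 1 j,
      (m k l
        + ((if ((k, l) : ℕ × ℕ) = (a0, b1) then 1 else 0) + (if ((k, l) : ℕ × ℕ) = (a1, b0) then 1 else 0))) :=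
    Finset.sum_congr rfl fun k _ => Finset.sum_congr rfl fun l _ =>
      moveMat_pw m a0 b0 a1 b1 ha hb h0 h1 k l
  simp only [Finset.sum_add_distrib] at hsum
  rw [sum_pair_ind, sum_pair_ind, sum_pair_ind, sum_pair_ind] at hsum
  exact hsum

lemma row_moveMat (m : ℕ → ℕ → ℕ) (a0 b0 a1 b1 r : ℕ) (ha : a0 ≠ a1) (hb : b0 ≠ b1)
    (h0 : 0 < m a0 b0) (h1 : 0 < m a1 b1)
    (hb0 : b0 ∈ Finset.Icc 1 r) (hb1 : b1 ∈ Finset.Icc 1 r) (i : ℕ) :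
    ∑ l ∈ Finset.Icc 1 r, moveMat m a0 b0 a1 b1 i l = ∑ l ∈ Finset.Icc 1 r, m i l := by
  have hsum : ∑ l ∈ Finset.Icc 1 r,
      (moveMat m a0 b0 a1 b1 i l
        + ((if ((i, l) : ℕ × ℕ) = (a0, b0) then 1 else 0) + (if ((i, l) : ℕ × ℕ) = (a1, b1) then 1 else 0)))
      = ∑ l ∈ Finset.Icc 1 r,
      (m i l
        + ((if ((i, l) : ℕ × ℕ) = (a0, b1) then 1 else 0) + (if ((i, l) : ℕ × ℕ) = (a1, b0) then 1 else 0))) :=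
    Finset.sum_congr rfl fun l _ => moveMat_pw m a0 b0 a1 b1 ha hb h0 h1 i l
  simp only [Finset.sum_add_distrib] at hsum
  rw [sum_row_ind, sum_row_ind, sum_row_ind, sum_row_ind] at hsum
  simp only [hb0, hb1, and_true] at hsum
  split_ifs at hsum <;> omega

lemma col_moveMat (m : ℕ → ℕ → ℕ) (a0 b0 a1 b1 q : ℕ) (ha : a0 ≠ a1) (hb : b0 ≠ b1)
    (h0 : 0 < m a0 b0) (h1 : 0 < m a1 b1)
    (ha0 : a0 ∈ Finset.Icc 1 q) (ha1 : a1 ∈ Finset.Icc 1 q) (j : ℕ) :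
    ∑ k ∈ Finset.Icc 1 q, moveMat m a0 b0 a1 b1 k j = ∑ k ∈ Finset.Icc 1 q, m k j := by
  have hsum : ∑ k ∈ Finset.Icc 1 q,
      (moveMat m a0 b0 a1 b1 k j
        + ((if ((k, j) : ℕ × ℕ) = (a0, b0) then 1 else 0) + (if ((k, j) : ℕ × ℕ) = (a1, b1) then 1 else 0)))
      = ∑ k ∈ Finset.Icc 1 q,
      (m k j
        + ((if ((k, j) : ℕ × ℕ) = (a0, b1) then 1 else 0) + (if ((k, j) : ℕ × ℕ) = (a1, b0) then 1 else 0))) :=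
    Finset.sum_congr rfl fun k _ => moveMat_pw m a0 b0 a1 b1 ha hb h0 h1 k j
  simp only [Finset.sum_add_distrib] at hsum
  rw [sum_col_ind, sum_col_ind, sum_col_ind, sum_col_ind] at hsum
  simp only [ha0, ha1, true_and] at hsum
  split_ifs at hsum <;> omega


/-- if `M ≤rk M'` and `M ≠ M'`, then some simple move `M →_R M̃`
satisfies `M̃ ≤rk M'`. -/
theorem exists_simple_move_of_rkLE (n q r : ℕ) (hn : 0 < n) (hq : 0 < q) (hr : 0 < r)
    (b c : ℕ → ℕ) (hb : IsComposition n q b) (hc : IsComposition n r c)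
    (m m' : ℕ → ℕ → ℕ) (hm : IsTransport q r b c m) (hm' : IsTransport q r b c m')
    (hle : RkLE q r m m') (hne : m ≠ m') :
    ∃ (i0 j0 i1 j1 : ℕ) (mt : ℕ → ℕ → ℕ),
      1 ≤ i0 ∧ i1 ≤ q ∧ 1 ≤ j0 ∧ j1 ≤ r ∧
      IsTransport q r b c mt ∧ IsSimpleMoveAt m mt i0 j0 i1 j1 ∧ RkLE q r mt m' := by
  classical
  obtain ⟨hms, hmr, hmc⟩ := hm
  obtain ⟨hms', hmr', hmc'⟩ := hm'
  -- boundary equalities of rank numbers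
  have hrow : ∀ i ≤ q, rk m i r = rk m' i r := by
    intro i hi
    unfold rk
    refine Finset.sum_congr rfl fun k hk => ?_
    have hkq : k ∈ Finset.Icc 1 q := by
      simp only [Finset.mem_Icc] at hk ⊢; omega
    rw [hmr k hkq, hmr' k hkq]
  have hcol : ∀ j ≤ r, rk m q j = rk m' q j := by
    intro j hj
    unfold rk
    rw [Finset.sum_comm, Finset.sum_comm (s := Finset.Icc 1 q)]
    refine Finset.sum_congr rfl fun l hl => ?_
    have hlr : l ∈ Finset.Icc 1 r := by
      simp only [Finset.mem_Icc] at hl ⊢; omega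
    rw [hmc l hlr, hmc' l hlr]
  -- first difference (lexicographic)
  have hex : ∃ i, ∃ j, m i j ≠ m' i j := by
    by_contra h
    push_neg at h
    exact hne (funext fun i => funext fun j => h i j)
  set i0 := Nat.find hex with hi0def
  have hexj : ∃ j, m i0 j ≠ m' i0 j := Nat.find_spec hex
  set j0 := Nat.find hexj with hj0def
  have hd0 : m i0 j0 ≠ m' i0 j0 := Nat.find_spec hexj
  have habove : ∀ k, k < i0 → ∀ l, m k l = m' k l := by
    intro k hk l
    by_contra h
    exact Nat.find_min hex hk ⟨l, h⟩
  have hleft : ∀ l, l < j0 → m i0 l = m' i0 l := by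
    intro l hl
    by_contra h
    exact Nat.find_min hexj hl h
  have hrange0 : 1 ≤ i0 ∧ i0 ≤ q ∧ 1 ≤ j0 ∧ j0 ≤ r := by
    by_contra h
    have h1 : i0 ∉ Finset.Icc 1 q ∨ j0 ∉ Finset.Icc 1 r := by
      simp only [Finset.mem_Icc, not_and_or, not_le] at *
      omega
    exact hd0 ((hms _ _ h1).trans (hms' _ _ h1).symm)
  -- local strictness at (i0, j0)
  have key0 : m' i0 j0 < m i0 j0 ∧ rk m' i0 j0 < rk m i0 j0 := by
    have e1 : rk m (i0-1) j0 = rk m' (i0-1) j0 := by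
      unfold rk
      refine Finset.sum_congr rfl fun k hk => Finset.sum_congr rfl fun l _ => ?_
      simp only [Finset.mem_Icc] at hk
      exact habove k (by omega) l
    have e2 : rk m i0 (j0-1) = rk m' i0 (j0-1) := by
      unfold rk
      refine Finset.sum_congr rfl fun k hk => Finset.sum_congr rfl fun l hl => ?_
      simp only [Finset.mem_Icc] at hk hl
      rcases Nat.lt_or_ge k i0 with h | h
      · exact habove k h l
      · have : k = i0 := by omega
        subst this
        exact hleft l (by omega)
    have e3 : rk m (i0-1) (j0-1) = rk m' (i0-1) (j0-1) := by
      unfold rk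
      refine Finset.sum_congr rfl fun k hk => Finset.sum_congr rfl fun l _ => ?_
      simp only [Finset.mem_Icc] at hk
      exact habove k (by omega) l
    have q1 := rk_add_mass m (i := i0 - 1) (i' := i0) (j := j0 - 1) (j' := j0) (by omega) (by omega)
    have q2 := rk_add_mass m' (i := i0 - 1) (i' := i0) (j := j0 - 1) (j' := j0) (by omega) (by omega)
    have hsing : ∀ (f : ℕ → ℕ → ℕ),
        ∑ k ∈ Finset.Ioc (i0-1) i0, ∑ l ∈ Finset.Ioc (j0-1) j0, f k l = f i0 j0 := by
      intro f
      have h1 : Finset.Ioc (i0-1) i0 = {i0} := by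
        ext x; simp only [Finset.mem_Ioc, Finset.mem_singleton]; omega
      have h2 : Finset.Ioc (j0-1) j0 = {j0} := by
        ext x; simp only [Finset.mem_Ioc, Finset.mem_singleton]; omega
      rw [h1, h2, Finset.sum_singleton, Finset.sum_singleton]
    rw [hsing m] at q1
    rw [hsing m'] at q2
    have hle0 := hle i0 hrange0.2.1 j0 hrange0.2.2.2
    omega
  -- i0 < q and j0 < r
  have hi0q : i0 < q := by
    rcases Nat.lt_or_ge i0 q with h | h
    · exact h
    · have he : i0 = q := by omega
      have h2 : rk m i0 j0 = rk m' i0 j0 := by rw [he]; exact hcol j0 hrange0.2.2.2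
      omega
  have hj0r : j0 < r := by
    rcases Nat.lt_or_ge j0 r with h | h
    · exact h
    · have he : j0 = r := by omega
      have h2 : rk m i0 j0 = rk m' i0 j0 := by rw [he]; exact hrow i0 hrange0.2.1
      omega
  -- I : first row below i0 where the column-j0 rank equalizes
  have hI : ∃ i, i0 < i ∧ rk m i j0 = rk m' i j0 := ⟨q, hi0q, hcol j0 hrange0.2.2.2⟩
  set I := Nat.find hI with hIdef
  obtain ⟨hI0, heqI⟩ : i0 < I ∧ rk m I j0 = rk m' I j0 := Nat.find_spec hI
  have hIq : I ≤ q := Nat.find_min' hI ⟨hi0q, hcol j0 hrange0.2.2.2⟩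
  have hIpos : ∀ i, i0 ≤ i → i < I → rk m' i j0 < rk m i j0 := by
    intro i h1 h2
    rcases Nat.lt_or_ge i0 i with h | h
    · have hne2 : ¬(i0 < i ∧ rk m i j0 = rk m' i j0) := Nat.find_min hI h2
      have hle2 := hle i (by omega) j0 hrange0.2.2.2
      have : rk m i j0 ≠ rk m' i j0 := fun he => hne2 ⟨h, he⟩
      omega
    · have : i = i0 := by omega
      subst this
      exact key0.2
  -- J : first column right of j0 where some row in [i0, I) equalizes
  have hJ : ∃ j, j0 < j ∧ ∃ i, i0 ≤ i ∧ i < I ∧ rk m i j = rk m' i j :=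
    ⟨r, hj0r, i0, le_refl i0, hI0, hrow i0 hrange0.2.1⟩
  set J := Nat.find hJ with hJdef
  obtain ⟨hJ0, istar, hist1, hist2, heqJ⟩ :
      j0 < J ∧ ∃ i, i0 ≤ i ∧ i < I ∧ rk m i J = rk m' i J := Nat.find_spec hJ
  have hJr : J ≤ r := Nat.find_min' hJ ⟨hj0r, i0, le_refl i0, hI0, hrow i0 hrange0.2.1⟩
  have hblock : ∀ i j, i0 ≤ i → i < I → j0 ≤ j → j < J → rk m' i j < rk m i j := by
    intro i j h1 h2 h3 h4
    rcases Nat.lt_or_ge j0 j with h | h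
    · have hne2 : ¬(j0 < j ∧ ∃ i, i0 ≤ i ∧ i < I ∧ rk m i j = rk m' i j) := Nat.find_min hJ h4
      have hle2 := hle i (by omega) j (by omega)
      have : rk m i j ≠ rk m' i j := fun he => hne2 ⟨h, i, h1, h2, he⟩
      omega
    · have : j = j0 := by omega
      subst this
      exact hIpos i h1 h2
  -- mass argument: a positive entry of m strictly inside (istar, I] × (j0, J]
  have hmass : 0 < ∑ k ∈ Finset.Ioc istar I, ∑ l ∈ Finset.Ioc j0 J, m k l := by
    have q1 := rk_add_mass m (i := istar) (i' := I) (j := j0) (j' := J) (by omega) (by omega)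
    have q2 := rk_add_mass m' (i := istar) (i' := I) (j := j0) (j' := J) (by omega) (by omega)
    have h1 := hle I hIq J hJr
    have h2 := hblock istar j0 hist1 hist2 (le_refl j0) hJ0
    omega
  obtain ⟨i1, hi1mem, hi1sum⟩ : ∃ k ∈ Finset.Ioc istar I, 0 < ∑ l ∈ Finset.Ioc j0 J, m k l := by
    by_contra h
    push_neg at h
    have : ∑ k ∈ Finset.Ioc istar I, ∑ l ∈ Finset.Ioc j0 J, m k l = 0 :=
      Finset.sum_eq_zero fun k hk => by have := h k hk; omega
    omega
  obtain ⟨j1, hj1mem, hj1pos⟩ : ∃ l ∈ Finset.Ioc j0 J, 0 < m i1 l := by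
    by_contra h
    push_neg at h
    have : ∑ l ∈ Finset.Ioc j0 J, m i1 l = 0 :=
      Finset.sum_eq_zero fun l hl => by have := h l hl; omega
    omega
  simp only [Finset.mem_Ioc] at hi1mem hj1mem
  -- Good quadruples and minimization by perimeter
  have hQ : ∃ k, ∃ a0 b0 a1 b1 : ℕ,
      (a0 < a1 ∧ b0 < b1 ∧ 0 < m a0 b0 ∧ 0 < m a1 b1 ∧
        ∀ i j, a0 ≤ i → i < a1 → b0 ≤ j → j < b1 → rk m' i j < rk m i j) ∧
      a1 - a0 + (b1 - b0) = k := by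
    refine ⟨_, i0, j0, i1, j1, ⟨?_, ?_, ?_, hj1pos, ?_⟩, rfl⟩
    · omega
    · omega
    · omega
    · intro i j h1 h2 h3 h4
      exact hblock i j h1 (by omega) h3 (by omega)
  obtain ⟨a0, b0, a1, b1, hG, hper⟩ :
      ∃ a0 b0 a1 b1 : ℕ,
        (a0 < a1 ∧ b0 < b1 ∧ 0 < m a0 b0 ∧ 0 < m a1 b1 ∧
          ∀ i j, a0 ≤ i → i < a1 → b0 ≤ j → j < b1 → rk m' i j < rk m i j) ∧
        a1 - a0 + (b1 - b0) = Nat.find hQ := Nat.find_spec hQ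
  obtain ⟨ha01, hb01, hpos0, hpos1, hGblk⟩ := hG
  -- bounds from support
  have hbndA : 1 ≤ a0 ∧ a0 ≤ q ∧ 1 ≤ b0 ∧ b0 ≤ r := by
    by_contra h
    have h1 : a0 ∉ Finset.Icc 1 q ∨ b0 ∉ Finset.Icc 1 r := by
      simp only [Finset.mem_Icc, not_and_or, not_le] at *
      omega
    have := hms _ _ h1
    omega
  have hbndB : 1 ≤ a1 ∧ a1 ≤ q ∧ 1 ≤ b1 ∧ b1 ≤ r := by
    by_contra h
    have h1 : a1 ∉ Finset.Icc 1 q ∨ b1 ∉ Finset.Icc 1 r := by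
      simp only [Finset.mem_Icc, not_and_or, not_le] at *
      omega
    have := hms _ _ h1
    omega
  -- zeros in the rectangle outside the four corners
  have hzero : ∀ i j : ℕ, a0 ≤ i → i ≤ a1 → b0 ≤ j → j ≤ b1 →
      (i, j) ≠ (a0, b0) → (i, j) ≠ (a1, b1) → (i, j) ≠ (a0, b1) → (i, j) ≠ (a1, b0) →
      m i j = 0 := by
    intro i j h1 h2 h3 h4 n1 n2 n3 n4
    simp only [ne_eq, Prod.mk.injEq, not_and] at n1 n2 n3 n4
    by_contra hposij
    by_cases hc : i < a1 ∧ j < b1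
    · refine Nat.find_min hQ (m := a1 - i + (b1 - j)) (by omega)
        ⟨i, j, a1, b1, ⟨hc.1, hc.2, by omega, hpos1, ?_⟩, rfl⟩
      intro u v hu1 hu2 hv1 hv2
      exact hGblk u v (by omega) hu2 (by omega) hv2
    · by_cases hc2 : a0 < i ∧ b0 < j
      · refine Nat.find_min hQ (m := i - a0 + (j - b0)) (by omega)
          ⟨a0, b0, i, j, ⟨hc2.1, hc2.2, hpos0, by omega, ?_⟩, rfl⟩
        intro u v hu1 hu2 hv1 hv2
        exact hGblk u v hu1 (by omega) hv1 (by omega)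
      · -- remaining positions are the four corners, excluded
        by_cases e1 : i = a0 <;> by_cases e2 : i = a1 <;>
          by_cases e3 : j = b0 <;> by_cases e4 : j = b1 <;> omega
  -- assemble the result
  have ha01' : a0 ≠ a1 := by omega
  have hb01' : b0 ≠ b1 := by omega
  have hb0mem : b0 ∈ Finset.Icc 1 r := by simp only [Finset.mem_Icc]; omega
  have hb1mem : b1 ∈ Finset.Icc 1 r := by simp only [Finset.mem_Icc]; omega
  have ha0mem : a0 ∈ Finset.Icc 1 q := by simp only [Finset.mem_Icc]; omega
  have ha1mem : a1 ∈ Finset.Icc 1 q := by simp only [Finset.mem_Icc]; omega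
  refine ⟨a0, b0, a1, b1, moveMat m a0 b0 a1 b1, by omega, by omega, by omega, by omega,
    ⟨?_, ?_, ?_⟩, ⟨ha01, hb01, hpos0, hpos1, hzero, rfl⟩, ?_⟩
  · -- support
    intro i j hij
    have hm0 : m i j = 0 := hms i j hij
    unfold moveMat
    simp only [Finset.mem_Icc, not_and_or, not_le] at hij
    simp only [Prod.mk.injEq, Finset.mem_Icc] at hbndA hbndB ⊢
    have hcond : ¬(i = a0 ∧ j = b0 ∨ i = a1 ∧ j = b1) := by omega
    have hcond2 : ¬(i = a0 ∧ j = b1 ∨ i = a1 ∧ j = b0) := by omega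
    rw [if_neg hcond, if_neg hcond2]
    exact hm0
  · -- row sums
    intro i hi
    rw [row_moveMat m a0 b0 a1 b1 r ha01' hb01' hpos0 hpos1 hb0mem hb1mem i]
    exact hmr i hi
  · -- column sums
    intro j hj
    rw [col_moveMat m a0 b0 a1 b1 q ha01' hb01' hpos0 hpos1 ha0mem ha1mem j]
    exact hmc j hj
  · -- rank order
    intro i hi j hj
    have base := hle i hi j hj
    have id1 := rk_moveMat m a0 b0 a1 b1 ha01' hb01' hpos0 hpos1 i j
    simp only [Finset.mem_Icc] at id1
    by_cases hin : a0 ≤ i ∧ i < a1 ∧ b0 ≤ j ∧ j < b1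
    · have hstrict := hGblk i j hin.1 hin.2.1 hin.2.2.1 hin.2.2.2
      split_ifs at id1 <;> omega
    · split_ifs at id1 <;> omega

end TwoFlagsLine
end

section
/- (Ehresmann tableau criterion) Let w and y be permutations of {1,…,n}. Then y lies above w in the partial order on permutations generated by the relations u < τ∘u for τ a transposition with ℓ(τ∘u) = ℓ(u) + 1, if and only if #([i] ∩ w[j]) ≥ #([i] ∩ y[j]) for all 1 ≤ i, j ≤ n. -/
open Finset

namespace TwoFlagsLine

/-- The number of inversions `ℓ(w)` of a permutation. -/
def invNum (n : ℕ) (w : Equiv.Perm (Fin n)) : ℕ :=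
  (Finset.univ.filter fun p : Fin n × Fin n => p.1 < p.2 ∧ w p.2 < w p.1).card

/-- `#([i] ∩ w[j])` for a permutation `w` of `{1, …, n}` realized on `Fin n`
(1-based indices `i`, `j`): the number of `a < j` with `w(a) < i` (0-based). -/
def rkPerm (n : ℕ) (w : Equiv.Perm (Fin n)) (i j : ℕ) : ℕ :=
  (Finset.univ.filter fun a : Fin n => (a : ℕ) < j ∧ (w a : ℕ) < i).card

/-- The covering relation: `v = τ ∘ u` for a transposition `τ` with
`ℓ(τ ∘ u) = ℓ(u) + 1`. -/
def BruhatCov (n : ℕ) (u v : Equiv.Perm (Fin n)) : Prop :=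
  (∃ a b : Fin n, a ≠ b ∧ v = Equiv.swap a b * u) ∧ invNum n v = invNum n u + 1

-- one-point filter card lemma
lemma card_filter_split {α : Type*} [Fintype α] [DecidableEq α] (P : α → Prop) [DecidablePred P]
    (x : α) :
    (univ.filter P).card = ((univ.erase x).filter P).card + (if P x then 1 else 0) := by
  by_cases h : P x
  · rw [if_pos h]
    have : univ.filter P = insert x ((univ.erase x).filter P) := by
      ext s
      by_cases hs : s = x <;> simp [hs, h]
    rw [this, card_insert_of_notMem (by simp)]
  · rw [if_neg h]
    have : univ.filter P = (univ.erase x).filter P := by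
      ext s
      by_cases hs : s = x <;> simp [hs, h]
    rw [this]; omega

lemma card_filter_two {α : Type*} [Fintype α] [DecidableEq α] (P Q : α → Prop)
    [DecidablePred P] [DecidablePred Q] (x z : α) (hxz : x ≠ z)
    (h : ∀ s, s ≠ x → s ≠ z → (P s ↔ Q s)) :
    ((univ.filter P).card : ℤ) = (univ.filter Q).card
      + (if P x then 1 else 0) - (if Q x then 1 else 0)
      + (if P z then 1 else 0) - (if Q z then 1 else 0) := by
  have e1 := card_filter_split P x
  have e2 := card_filter_split Q x
  have e3 : ((univ.erase x).filter P).card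
      = (((univ.erase x).erase z).filter P).card + (if P z then 1 else 0) := by
    by_cases hz : P z
    · rw [if_pos hz]
      have : (univ.erase x).filter P = insert z (((univ.erase x).erase z).filter P) := by
        ext s; by_cases hs : s = z <;> simp [hs, hz, hxz.symm]
      rw [this, card_insert_of_notMem (by simp)]
    · rw [if_neg hz]
      have : (univ.erase x).filter P = ((univ.erase x).erase z).filter P := by
        ext s; by_cases hs : s = z <;> simp [hs, hz]
      rw [this]; omega
  have e4 : ((univ.erase x).filter Q).card
      = (((univ.erase x).erase z).filter Q).card + (if Q z then 1 else 0) := by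
    by_cases hz : Q z
    · rw [if_pos hz]
      have : (univ.erase x).filter Q = insert z (((univ.erase x).erase z).filter Q) := by
        ext s; by_cases hs : s = z <;> simp [hs, hz, hxz.symm]
      rw [this, card_insert_of_notMem (by simp)]
    · rw [if_neg hz]
      have : (univ.erase x).filter Q = ((univ.erase x).erase z).filter Q := by
        ext s; by_cases hs : s = z <;> simp [hs, hz]
      rw [this]; omega
  have e5 : ((univ.erase x).erase z).filter P = ((univ.erase x).erase z).filter Q := by
    apply filter_congr
    intro s hs
    simp only [mem_erase] at hs
    exact (by simpa using h s hs.2.1 hs.1 : P s ↔ Q s)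
  rw [e5] at e3
  split_ifs at * <;> push_cast [e1, e2, e3, e4] <;> omega


def colInv (n : ℕ) (w : Equiv.Perm (Fin n)) (t : Fin n) : ℕ :=
  (univ.filter fun s : Fin n => (s : ℕ) < (t : ℕ) ∧ (w t : ℕ) < (w s : ℕ)).card

lemma invNum_eq_sum (n : ℕ) (w : Equiv.Perm (Fin n)) :
    invNum n w = ∑ t : Fin n, colInv n w t := by
  classical
  rw [invNum, Finset.card_filter, Fintype.sum_prod_type, Finset.sum_comm]
  apply Finset.sum_congr rfl
  intro t _
  rw [colInv, Finset.card_filter]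
  apply Finset.sum_congr rfl
  intro s _
  exact if_congr Iff.rfl rfl rfl

section Swap
variable {n : ℕ} (u : Equiv.Perm (Fin n)) (p q : Fin n)

lemma swap_apply_p : (Equiv.swap (u p) (u q) * u) p = u q := by
  simp [Equiv.Perm.mul_apply]

lemma swap_apply_q : (Equiv.swap (u p) (u q) * u) q = u p := by
  simp [Equiv.Perm.mul_apply]

lemma swap_apply_other {s : Fin n} (hs1 : s ≠ p) (hs2 : s ≠ q) :
    (Equiv.swap (u p) (u q) * u) s = u s := by
  simp [Equiv.Perm.mul_apply,
    Equiv.swap_apply_of_ne_of_ne (u.injective.ne hs1) (u.injective.ne hs2)]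

lemma val_ne_of_ne {s t : Fin n} (h : s ≠ t) : (s : ℕ) ≠ (t : ℕ) := by
  simpa [Fin.val_eq_val] using h

lemma uval_ne_of_ne (s t : Fin n) (h : s ≠ t) : (u s : ℕ) ≠ (u t : ℕ) := by
  simpa [Fin.val_eq_val] using u.injective.ne h

end Swap

section Formula
variable {n : ℕ}

-- column t ∉ {p, q}
lemma col_other (u : Equiv.Perm (Fin n)) (p q t : Fin n) (ht1 : t ≠ p) (ht2 : t ≠ q)
    (hpq : p < q) (hval : u p < u q) :
    (colInv n (Equiv.swap (u p) (u q) * u) t : ℤ)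
      = colInv n u t + (if (p:ℕ) < t ∧ (t:ℕ) < q ∧ (u p:ℕ) < u t ∧ (u t:ℕ) < u q
          then 1 else 0) := by
  classical
  have key := card_filter_two
    (fun s : Fin n => (s:ℕ) < (t:ℕ)
        ∧ ((Equiv.swap (u p) (u q) * u) t : ℕ) < ((Equiv.swap (u p) (u q) * u) s : ℕ))
    (fun s : Fin n => (s:ℕ) < (t:ℕ) ∧ (u t : ℕ) < (u s : ℕ)) p q (ne_of_lt hpq)
    (by
      intro s hs1 hs2
      simp only [swap_apply_other u p q hs1 hs2, swap_apply_other u p q ht1 ht2])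
  simp only [swap_apply_p, swap_apply_q, swap_apply_other u p q ht1 ht2] at key
  rw [colInv, colInv]
  simp only [swap_apply_other u p q ht1 ht2]
  rw [key]
  have h1 := uval_ne_of_ne u t p ht1
  have h2 := uval_ne_of_ne u t q ht2
  have h3 : (p : ℕ) < (q : ℕ) := hpq
  have h4 := val_ne_of_ne ht1
  have h5 := val_ne_of_ne ht2
  have h6 : (u p : ℕ) < (u q : ℕ) := hval
  split_ifs <;> omega

end Formula

section Formula2
variable {n : ℕ}

lemma card_split_val (u : Equiv.Perm (Fin n)) (C : Fin n → Prop) [DecidablePred C]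
    (a b : ℕ) (hab : a < b) (hne : ∀ s, C s → (u s : ℕ) ≠ b) :
    (univ.filter fun s => C s ∧ a < (u s : ℕ)).card
      = (univ.filter fun s => C s ∧ b < (u s : ℕ)).card
        + (univ.filter fun s => C s ∧ a < (u s : ℕ) ∧ (u s : ℕ) < b).card := by
  classical
  rw [← card_union_of_disjoint]
  · congr 1
    ext s
    simp only [mem_filter, mem_union, mem_univ, true_and]
    by_cases hC : C s
    · have := hne s hC
      constructor
      · rintro ⟨-, h2⟩
        rcases lt_trichotomy ((u s : ℕ)) b with h | h | h
        · exact Or.inr ⟨hC, h2, h⟩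
        · exact absurd h this
        · exact Or.inl ⟨hC, h⟩
      · rintro (⟨-, h2⟩ | ⟨-, h2, h3⟩) <;> exact ⟨hC, by omega⟩
    · simp [hC]
  · rw [Finset.disjoint_left]
    intro s h1 h2
    simp only [mem_filter] at h1 h2
    omega

lemma card_split_pos (C : Fin n → Prop) [DecidablePred C] (pn qn : ℕ) (hpq : pn < qn)
    (hp : ∀ s : Fin n, (s : ℕ) = pn → ¬ C s) :
    (univ.filter fun s : Fin n => (s : ℕ) < qn ∧ C s).card
      = (univ.filter fun s : Fin n => (s : ℕ) < pn ∧ C s).card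
        + (univ.filter fun s : Fin n => pn < (s : ℕ) ∧ (s : ℕ) < qn ∧ C s).card := by
  classical
  rw [← card_union_of_disjoint]
  · congr 1
    ext s
    simp only [mem_filter, mem_union, mem_univ, true_and]
    by_cases hC : C s
    · have := hp s
      constructor
      · rintro ⟨h1, -⟩
        rcases lt_trichotomy (s : ℕ) pn with h | h | h
        · exact Or.inl ⟨h, hC⟩
        · exact absurd hC (hp s h)
        · exact Or.inr ⟨h, h1, hC⟩
      · rintro (⟨h1, -⟩ | ⟨h1, h2, -⟩) <;> exact ⟨by omega, hC⟩
    · simp [hC]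
  · rw [Finset.disjoint_left]
    intro s h1 h2
    simp only [mem_filter] at h1 h2
    omega

lemma col_p (u : Equiv.Perm (Fin n)) (p q : Fin n) (hpq : p < q) (hval : u p < u q) :
    colInv n u p = colInv n (Equiv.swap (u p) (u q) * u) p
      + (univ.filter fun s : Fin n =>
          (s : ℕ) < (p : ℕ) ∧ (u p : ℕ) < (u s : ℕ) ∧ (u s : ℕ) < (u q : ℕ)).card := by
  classical
  have h3 : (p : ℕ) < (q : ℕ) := hpq
  have hfe : (univ.filter fun s : Fin n => (s : ℕ) < (p : ℕ)
        ∧ ((Equiv.swap (u p) (u q) * u) p : ℕ) < ((Equiv.swap (u p) (u q) * u) s : ℕ))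
      = univ.filter fun s : Fin n => (s : ℕ) < (p : ℕ) ∧ (u q : ℕ) < (u s : ℕ) := by
    apply filter_congr
    intro s _
    by_cases hs : (s : ℕ) < (p : ℕ)
    · have hs1 : s ≠ p := by intro h; subst h; omega
      have hs2 : s ≠ q := by
        intro h; subst h; omega
      rw [swap_apply_other u p q hs1 hs2, swap_apply_p]
    · simp [hs]
  rw [colInv, colInv, hfe]
  exact card_split_val u (fun s => (s : ℕ) < (p : ℕ)) (u p) (u q) hval
    (fun s hC => uval_ne_of_ne u s q (by intro h; subst h; omega))

lemma col_q (u : Equiv.Perm (Fin n)) (p q : Fin n) (hpq : p < q) (hval : u p < u q) :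
    colInv n (Equiv.swap (u p) (u q) * u) q = colInv n u q + 1
      + (univ.filter fun s : Fin n =>
          (s : ℕ) < (p : ℕ) ∧ (u p : ℕ) < (u s : ℕ) ∧ (u s : ℕ) < (u q : ℕ)).card
      + (univ.filter fun s : Fin n =>
          (p : ℕ) < (s : ℕ) ∧ (s : ℕ) < (q : ℕ)
            ∧ (u p : ℕ) < (u s : ℕ) ∧ (u s : ℕ) < (u q : ℕ)).card := by
  classical
  have h3 : (p : ℕ) < (q : ℕ) := hpq
  have hvv : (u p : ℕ) < (u q : ℕ) := hval
  -- the filter for v at column q is insert p of the u-filter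
  have hfe : (univ.filter fun s : Fin n => (s : ℕ) < (q : ℕ)
        ∧ ((Equiv.swap (u p) (u q) * u) q : ℕ) < ((Equiv.swap (u p) (u q) * u) s : ℕ))
      = insert p (univ.filter fun s : Fin n =>
          (s : ℕ) < (q : ℕ) ∧ (u p : ℕ) < (u s : ℕ)) := by
    ext s
    simp only [mem_filter, mem_insert, mem_univ, true_and]
    constructor
    · rintro ⟨h1, h2⟩
      by_cases hsp : s = p
      · exact Or.inl hsp
      · right
        have hsq : s ≠ q := by intro h; subst h; omega
        rw [swap_apply_other u p q hsp hsq, swap_apply_q] at h2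
        exact ⟨h1, h2⟩
    · intro h
      rcases h with hsp | ⟨h1, h2⟩
      · subst hsp
        rw [swap_apply_q, swap_apply_p]
        exact ⟨h3, hvv⟩
      · have hsq : s ≠ q := by intro h; subst h; omega
        by_cases hsp : s = p
        · subst hsp
          rw [swap_apply_q, swap_apply_p]
          exact ⟨h1, hvv⟩
        · rw [swap_apply_other u p q hsp hsq, swap_apply_q]
          exact ⟨h1, h2⟩
  rw [colInv, colInv, hfe, card_insert_of_notMem (by simp)]
  have split1 := card_split_val u (fun s : Fin n => (s : ℕ) < (q : ℕ)) (u p) (u q) hval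
    (fun s hC => uval_ne_of_ne u s q (by intro h; subst h; omega))
  have split2 := card_split_pos (fun s : Fin n =>
      (u p : ℕ) < (u s : ℕ) ∧ (u s : ℕ) < (u q : ℕ)) (p : ℕ) (q : ℕ) h3
    (fun s hs => by
      have : s = p := by
        apply Fin.ext
        exact hs
      subst this
      simp)
  beta_reduce at split1 split2
  omega

end Formula2

lemma invNum_swap {n : ℕ} (u : Equiv.Perm (Fin n)) (p q : Fin n) (hpq : p < q)
    (hval : u p < u q) :
    invNum n (Equiv.swap (u p) (u q) * u) = invNum n u + 1
      + 2 * (univ.filter fun s : Fin n =>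
          (p : ℕ) < (s : ℕ) ∧ (s : ℕ) < (q : ℕ)
            ∧ (u p : ℕ) < (u s : ℕ) ∧ (u s : ℕ) < (u q : ℕ)).card := by
  classical
  obtain ⟨A, hA⟩ : ∃ A, A = (univ.filter fun s : Fin n =>
      (s : ℕ) < (p : ℕ) ∧ (u p : ℕ) < (u s : ℕ) ∧ (u s : ℕ) < (u q : ℕ)).card := ⟨_, rfl⟩
  obtain ⟨B, hB⟩ : ∃ B, B = (univ.filter fun s : Fin n =>
      (p : ℕ) < (s : ℕ) ∧ (s : ℕ) < (q : ℕ)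
        ∧ (u p : ℕ) < (u s : ℕ) ∧ (u s : ℕ) < (u q : ℕ)).card := ⟨_, rfl⟩
  rw [← hB]
  have hqp : ¬ (q = p) := (ne_of_lt hpq).symm
  have hcol : ∀ t : Fin n, (colInv n (Equiv.swap (u p) (u q) * u) t : ℤ)
      = colInv n u t + (if t = p then -(A : ℤ) else if t = q then 1 + A + B
          else if (p : ℕ) < (t : ℕ) ∧ (t : ℕ) < (q : ℕ)
            ∧ (u p : ℕ) < (u t : ℕ) ∧ (u t : ℕ) < (u q : ℕ) then 1 else 0) := by
    intro t
    by_cases htp : t = p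
    · subst htp
      rw [if_pos rfl]
      have := col_p u t q hpq hval
      rw [← hA] at this
      omega
    · by_cases htq : t = q
      · subst htq
        rw [if_neg htp, if_pos rfl]
        have := col_q u p t hpq hval
        rw [← hA, ← hB] at this
        omega
      · simp only [if_neg htp, if_neg htq]
        exact col_other u p q t htp htq hpq hval
  have hsum : (invNum n (Equiv.swap (u p) (u q) * u) : ℤ)
      = invNum n u + ∑ t : Fin n, (if t = p then -(A : ℤ)
          else if t = q then 1 + A + B
          else if (p : ℕ) < (t : ℕ) ∧ (t : ℕ) < (q : ℕ)
            ∧ (u p : ℕ) < (u t : ℕ) ∧ (u t : ℕ) < (u q : ℕ) then 1 else 0) := by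
    rw [invNum_eq_sum, invNum_eq_sum]
    push_cast
    rw [← Finset.sum_add_distrib]
    exact Finset.sum_congr rfl fun t _ => hcol t
  have hq' : q ∈ univ.erase p := by simp [hqp]
  have hrest : ∑ t ∈ (univ.erase p).erase q, (if t = p then -(A : ℤ)
      else if t = q then 1 + A + B
      else if (p : ℕ) < (t : ℕ) ∧ (t : ℕ) < (q : ℕ)
        ∧ (u p : ℕ) < (u t : ℕ) ∧ (u t : ℕ) < (u q : ℕ) then 1 else 0) = B := by
    have step : ∀ t ∈ (univ.erase p).erase q, (if t = p then -(A : ℤ)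
        else if t = q then 1 + A + B
        else if (p : ℕ) < (t : ℕ) ∧ (t : ℕ) < (q : ℕ)
          ∧ (u p : ℕ) < (u t : ℕ) ∧ (u t : ℕ) < (u q : ℕ) then 1 else 0)
        = (if (p : ℕ) < (t : ℕ) ∧ (t : ℕ) < (q : ℕ)
          ∧ (u p : ℕ) < (u t : ℕ) ∧ (u t : ℕ) < (u q : ℕ) then (1 : ℤ) else 0) := by
      intro t ht
      simp only [mem_erase] at ht
      rw [if_neg ht.2.1, if_neg ht.1]
    rw [Finset.sum_congr rfl step, Finset.sum_boole]
    have : ((univ.erase p).erase q).filter (fun t : Fin n =>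
        (p : ℕ) < (t : ℕ) ∧ (t : ℕ) < (q : ℕ)
          ∧ (u p : ℕ) < (u t : ℕ) ∧ (u t : ℕ) < (u q : ℕ))
        = univ.filter (fun t : Fin n => (p : ℕ) < (t : ℕ) ∧ (t : ℕ) < (q : ℕ)
          ∧ (u p : ℕ) < (u t : ℕ) ∧ (u t : ℕ) < (u q : ℕ)) := by
      ext t
      simp only [mem_filter, mem_erase, mem_univ, true_and, and_true]
      constructor
      · rintro ⟨-, h⟩
        exact h
      · intro h
        refine ⟨⟨?_, ?_⟩, h⟩
        · intro he
          subst he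
          omega
        · intro he
          subst he
          omega
    rw [this, hB]
  have key : (invNum n (Equiv.swap (u p) (u q) * u) : ℤ) = invNum n u + 1 + 2 * B := by
    rw [hsum, ← Finset.add_sum_erase _ _ (mem_univ p), ← Finset.add_sum_erase _ _ hq']
    rw [hrest]
    rw [if_pos rfl, if_neg hqp, if_pos rfl]
    ring
  exact_mod_cast key


section Rk
variable {n : ℕ}

lemma rk_swap (u : Equiv.Perm (Fin n)) (p q : Fin n) (hpq : p ≠ q) (i j : ℕ) :
    (rkPerm n (Equiv.swap (u p) (u q) * u) i j : ℤ) = rkPerm n u i j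
      + (if (p : ℕ) < j ∧ (u q : ℕ) < i then 1 else 0)
      + (if (q : ℕ) < j ∧ (u p : ℕ) < i then 1 else 0)
      - (if (p : ℕ) < j ∧ (u p : ℕ) < i then 1 else 0)
      - (if (q : ℕ) < j ∧ (u q : ℕ) < i then 1 else 0) := by
  classical
  have key := card_filter_two
    (fun s : Fin n => (s : ℕ) < j ∧ (((Equiv.swap (u p) (u q) * u) s : Fin n) : ℕ) < i)
    (fun s : Fin n => (s : ℕ) < j ∧ (u s : ℕ) < i) p q hpq
    (by
      intro s hs1 hs2
      simp only [swap_apply_other u p q hs1 hs2])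
  rw [rkPerm, rkPerm, key]
  simp only [swap_apply_p, swap_apply_q]
  ring

lemma rk_swap_le (u : Equiv.Perm (Fin n)) (p q : Fin n) (hpq : p < q) (hval : u p < u q)
    (i j : ℕ) :
    rkPerm n (Equiv.swap (u p) (u q) * u) i j ≤ rkPerm n u i j := by
  have key := rk_swap u p q (ne_of_lt hpq) i j
  have h1 : (p : ℕ) < (q : ℕ) := hpq
  have h2 : (u p : ℕ) < (u q : ℕ) := hval
  split_ifs at key <;> omega

lemma rk_swap_strict (u : Equiv.Perm (Fin n)) (p q : Fin n) (hpq : p < q) (hval : u p < u q)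
    (i j : ℕ) (hj1 : (p : ℕ) < j) (hj2 : j ≤ (q : ℕ))
    (hi1 : (u p : ℕ) < i) (hi2 : i ≤ (u q : ℕ)) :
    rkPerm n (Equiv.swap (u p) (u q) * u) i j + 1 = rkPerm n u i j := by
  have key := rk_swap u p q (ne_of_lt hpq) i j
  have h1 : (p : ℕ) < (q : ℕ) := hpq
  have h2 : (u p : ℕ) < (u q : ℕ) := hval
  split_ifs at key <;> omega

-- ranks agree below the first difference etc.
lemma rk_congr (w y : Equiv.Perm (Fin n)) (i j : ℕ)
    (h : ∀ a : Fin n, (a : ℕ) < j → w a = y a) :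
    rkPerm n w i j = rkPerm n y i j := by
  unfold rkPerm
  congr 1
  apply filter_congr
  intro a _
  by_cases ha : (a : ℕ) < j
  · rw [h a ha]
  · simp [ha]

lemma card_filter_perm (w : Equiv.Perm (Fin n)) (P : Fin n → Prop) [DecidablePred P] :
    (univ.filter fun a => P (w a)).card = (univ.filter P).card := by
  apply Finset.card_bij' (fun a _ => w a) (fun b _ => w.symm b)
  · intro a ha
    simp only [mem_filter, mem_univ, true_and] at ha ⊢
    exact ha
  · intro b hb
    simp only [mem_filter, mem_univ, true_and] at hb ⊢
    simpa using hb
  · intro a _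
    simp
  · intro b _
    simp

lemma rk_big_i (w : Equiv.Perm (Fin n)) (i j : ℕ) (hi : n ≤ i) :
    rkPerm n w i j = (univ.filter fun a : Fin n => (a : ℕ) < j).card := by
  unfold rkPerm
  congr 1
  apply filter_congr
  intro a _
  have : (w a : ℕ) < i := lt_of_lt_of_le (w a).isLt hi
  simp [this]

lemma rk_big_j (w : Equiv.Perm (Fin n)) (i j : ℕ) (hj : n ≤ j) :
    rkPerm n w i j = (univ.filter fun b : Fin n => (b : ℕ) < i).card := by
  unfold rkPerm
  rw [← card_filter_perm w (fun b => (b : ℕ) < i)]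
  congr 1
  apply filter_congr
  intro a _
  have : (a : ℕ) < j := lt_of_lt_of_le a.isLt hj
  simp [this]

lemma rk_ext (w y : Equiv.Perm (Fin n))
    (h : ∀ i j : ℕ, 1 ≤ i → i ≤ n → 1 ≤ j → j ≤ n → rkPerm n y i j ≤ rkPerm n w i j) :
    ∀ i j : ℕ, rkPerm n y i j ≤ rkPerm n w i j := by
  intro i j
  rcases Nat.eq_zero_or_pos i with hi0 | hi1
  · subst hi0
    have : rkPerm n y 0 j = 0 := by
      unfold rkPerm
      rw [Finset.card_eq_zero, Finset.filter_eq_empty_iff]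
      intro a _
      simp
    omega
  rcases Nat.eq_zero_or_pos j with hj0 | hj1
  · subst hj0
    have : rkPerm n y i 0 = 0 := by
      unfold rkPerm
      rw [Finset.card_eq_zero, Finset.filter_eq_empty_iff]
      intro a _
      simp
    omega
  rcases le_or_gt i n with hi2 | hi2
  · rcases le_or_gt j n with hj2 | hj2
    · exact h i j hi1 hi2 hj1 hj2
    · rw [rk_big_j w i j (le_of_lt hj2), rk_big_j y i j (le_of_lt hj2)]
  · rw [rk_big_i w i j (le_of_lt hi2), rk_big_i y i j (le_of_lt hi2)]

end Rk


section Fwd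
variable {n : ℕ}

lemma core_rk_le {u v : Equiv.Perm (Fin n)} {a b : Fin n} (hab : a < b)
    (hv : v = Equiv.swap a b * u) (hlen : invNum n v = invNum n u + 1) (i j : ℕ) :
    rkPerm n v i j ≤ rkPerm n u i j := by
  classical
  obtain ⟨p, hup⟩ : ∃ p, u p = a := ⟨u.symm a, u.apply_symm_apply a⟩
  obtain ⟨q, huq⟩ : ∃ q, u q = b := ⟨u.symm b, u.apply_symm_apply b⟩
  have hpq : p ≠ q := by
    intro h
    rw [h, huq] at hup
    exact (ne_of_lt hab) hup.symm
  have hv' : v = Equiv.swap (u p) (u q) * u := by rw [hup, huq]; exact hv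
  rcases lt_trichotomy p q with h | h | h
  · rw [hv']
    exact rk_swap_le u p q h (by rw [hup, huq]; exact hab) i j
  · exact absurd h hpq
  · -- q < p : contradiction on lengths
    exfalso
    have hvq : v q = a := by
      rw [hv]
      simp [Equiv.Perm.mul_apply, huq]
    have hvp : v p = b := by
      rw [hv]
      simp [Equiv.Perm.mul_apply, hup]
    have key := invNum_swap v q p h (by rw [hvq, hvp]; exact hab)
    have hswap : Equiv.swap (v q) (v p) * v = u := by
      rw [hvq, hvp, hv, ← mul_assoc, Equiv.swap_mul_self, one_mul]
    rw [hswap] at key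
    omega

lemma bruhatCov_rk_le {u v : Equiv.Perm (Fin n)} (h : BruhatCov n u v) (i j : ℕ) :
    rkPerm n v i j ≤ rkPerm n u i j := by
  obtain ⟨⟨a, b, hab, hv⟩, hlen⟩ := h
  rcases lt_or_gt_of_ne hab with hlt | hlt
  · exact core_rk_le hlt hv hlen i j
  · rw [Equiv.swap_comm] at hv
    exact core_rk_le hlt hv hlen i j

lemma rtg_rk_le {w y : Equiv.Perm (Fin n)} (h : Relation.ReflTransGen (BruhatCov n) w y)
    (i j : ℕ) : rkPerm n y i j ≤ rkPerm n w i j := by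
  induction h with
  | refl => exact le_rfl
  | tail hstep hcov ih => exact le_trans (bruhatCov_rk_le hcov i j) ih

end Fwd

section Bwd
variable {n : ℕ}

lemma rk_succ (w : Equiv.Perm (Fin n)) (t : Fin n) (i : ℕ) :
    rkPerm n w i ((t : ℕ) + 1) = rkPerm n w i (t : ℕ) + (if (w t : ℕ) < i then 1 else 0) := by
  classical
  have h1 := card_filter_split (fun a : Fin n => (a : ℕ) < (t : ℕ) + 1 ∧ (w a : ℕ) < i) t
  have h2 := card_filter_split (fun a : Fin n => (a : ℕ) < (t : ℕ) ∧ (w a : ℕ) < i) t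
  have he : (univ.erase t).filter (fun a : Fin n => (a : ℕ) < (t : ℕ) + 1 ∧ (w a : ℕ) < i)
      = (univ.erase t).filter (fun a : Fin n => (a : ℕ) < (t : ℕ) ∧ (w a : ℕ) < i) := by
    apply filter_congr
    intro a ha
    simp only [mem_erase] at ha
    have := val_ne_of_ne ha.1
    constructor
    · rintro ⟨h, h'⟩
      exact ⟨by omega, h'⟩
    · rintro ⟨h, h'⟩
      exact ⟨by omega, h'⟩
  unfold rkPerm
  rw [h1, h2, he]
  by_cases hwt : (w t : ℕ) < i
  · rw [if_pos ⟨by omega, hwt⟩, if_neg (fun h => absurd h.1 (lt_irrefl _)), if_pos hwt]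
  · rw [if_neg (fun h => hwt h.2), if_neg (fun h => absurd h.1 (lt_irrefl _)), if_neg hwt]

lemma rk_window (w : Equiv.Perm (Fin n)) (kn j i : ℕ) (hkj : kn ≤ j) :
    rkPerm n w i j = rkPerm n w i kn
      + (univ.filter fun s : Fin n => kn ≤ (s : ℕ) ∧ (s : ℕ) < j ∧ (w s : ℕ) < i).card := by
  classical
  unfold rkPerm
  rw [← card_union_of_disjoint]
  · congr 1
    ext s
    simp only [mem_filter, mem_union, mem_univ, true_and]
    constructor
    · rintro ⟨h1, h2⟩
      rcases lt_or_ge ((s : ℕ)) kn with h | h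
      · exact Or.inl ⟨h, h2⟩
      · exact Or.inr ⟨h, h1, h2⟩
    · rintro (⟨h1, h2⟩ | ⟨h1, h2, h3⟩)
      · exact ⟨by omega, h2⟩
      · exact ⟨h2, h3⟩
  · rw [Finset.disjoint_left]
    intro s h1 h2
    simp only [mem_filter] at h1 h2
    omega

lemma step_exists (x y : Equiv.Perm (Fin n)) (hne : x ≠ y)
    (hrk : ∀ i j, rkPerm n y i j ≤ rkPerm n x i j) :
    ∃ x' : Equiv.Perm (Fin n), BruhatCov n x x'
      ∧ (∀ i j, rkPerm n y i j ≤ rkPerm n x' i j)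
      ∧ (∀ i j, rkPerm n x' i j ≤ rkPerm n x i j)
      ∧ (∃ i0 j0, i0 ≤ n ∧ j0 ≤ n ∧ rkPerm n x' i0 j0 < rkPerm n x i0 j0) := by
  classical
  -- first position where x and y differ
  have hS : (univ.filter fun m : Fin n => x m ≠ y m).Nonempty := by
    by_contra h
    rw [Finset.not_nonempty_iff_eq_empty, Finset.filter_eq_empty_iff] at h
    exact hne (Equiv.ext fun m => by simpa using h (mem_univ m))
  set S := univ.filter fun m : Fin n => x m ≠ y m with hSdef
  set k := S.min' hS with hkdef
  have hk : x k ≠ y k := (mem_filter.mp (S.min'_mem hS)).2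
  have agree : ∀ a : Fin n, (a : ℕ) < (k : ℕ) → x a = y a := by
    intro a ha
    by_contra h
    have : k ≤ a := S.min'_le a (mem_filter.mpr ⟨mem_univ a, h⟩)
    exact absurd this (by exact not_le.mpr ha)
  -- x k < y k
  have hky : (x k : ℕ) < (y k : ℕ) := by
    rcases lt_trichotomy ((x k : ℕ)) ((y k : ℕ)) with h | h | h
    · exact h
    · exact absurd (Fin.ext h) hk
    · exfalso
      have e1 := rk_succ x k ((y k : ℕ) + 1)
      have e2 := rk_succ y k ((y k : ℕ) + 1)
      have e3 : rkPerm n x ((y k : ℕ) + 1) (k : ℕ) = rkPerm n y ((y k : ℕ) + 1) (k : ℕ) :=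
        rk_congr x y _ _ agree
      have e4 := hrk ((y k : ℕ) + 1) ((k : ℕ) + 1)
      rw [if_neg (by omega)] at e1
      rw [if_pos (by omega)] at e2
      omega
  -- the minimal index l > k with x k < x l ≤ y k
  have hS2 : (univ.filter fun m : Fin n =>
      (k : ℕ) < (m : ℕ) ∧ (x k : ℕ) < (x m : ℕ) ∧ (x m : ℕ) ≤ (y k : ℕ)).Nonempty := by
    refine ⟨x.symm (y k), ?_⟩
    have hm0 : x (x.symm (y k)) = y k := x.apply_symm_apply (y k)
    simp only [mem_filter, mem_univ, true_and, hm0]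
    refine ⟨?_, hky, le_rfl⟩
    rcases lt_trichotomy ((x.symm (y k) : ℕ)) ((k : ℕ)) with h | h | h
    · exfalso
      have := agree _ h
      rw [hm0] at this
      have : x.symm (y k) = k := y.injective this.symm
      omega
    · exfalso
      have : x.symm (y k) = k := Fin.ext h
      rw [this] at hm0
      exact hk hm0
    · exact h
  set S2 := univ.filter fun m : Fin n =>
      (k : ℕ) < (m : ℕ) ∧ (x k : ℕ) < (x m : ℕ) ∧ (x m : ℕ) ≤ (y k : ℕ) with hS2def
  set l := S2.min' hS2 with hldef
  have hlmem := mem_filter.mp (S2.min'_mem hS2)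
  have hkl : (k : ℕ) < (l : ℕ) := hlmem.2.1
  have hxkl : (x k : ℕ) < (x l : ℕ) := hlmem.2.2.1
  have hxlyk : (x l : ℕ) ≤ (y k : ℕ) := hlmem.2.2.2
  have hklt : k < l := hkl
  have hval : x k < x l := hxkl
  have hwindow : ∀ m : Fin n, (k : ℕ) < (m : ℕ) → (m : ℕ) < (l : ℕ) →
      ¬((x k : ℕ) < (x m : ℕ) ∧ (x m : ℕ) < (x l : ℕ)) := by
    rintro m h1 h2 ⟨h3, h4⟩
    have : l ≤ m := S2.min'_le m (mem_filter.mpr ⟨mem_univ m, h1, h3, by omega⟩)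
    have : (l : ℕ) ≤ (m : ℕ) := this
    omega
  -- strictness in the bad rectangle
  have hstrict : ∀ i j : ℕ, (k : ℕ) < j → j ≤ (l : ℕ) → (x k : ℕ) < i → i ≤ (x l : ℕ) →
      rkPerm n y i j + 1 ≤ rkPerm n x i j := by
    intro i j hj1 hj2 hi1 hi2
    have hwx1 := rk_window x (k : ℕ) j i (by omega)
    have hwx2 := rk_window x (k : ℕ) j ((y k : ℕ) + 1) (by omega)
    have hwy1 := rk_window y (k : ℕ) j i (by omega)
    have hwy2 := rk_window y (k : ℕ) j ((y k : ℕ) + 1) (by omega)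
    have hcong1 : rkPerm n x i (k : ℕ) = rkPerm n y i (k : ℕ) := rk_congr x y _ _ agree
    have hcong2 : rkPerm n x ((y k : ℕ) + 1) (k : ℕ) = rkPerm n y ((y k : ℕ) + 1) (k : ℕ) :=
      rk_congr x y _ _ agree
    -- the x-window counts agree at thresholds i and y k + 1
    have hxw : (univ.filter fun s : Fin n =>
        (k : ℕ) ≤ (s : ℕ) ∧ (s : ℕ) < j ∧ (x s : ℕ) < i)
        = univ.filter fun s : Fin n =>
          (k : ℕ) ≤ (s : ℕ) ∧ (s : ℕ) < j ∧ (x s : ℕ) < (y k : ℕ) + 1 := by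
      apply filter_congr
      intro s _
      by_cases hs : (k : ℕ) ≤ (s : ℕ) ∧ (s : ℕ) < j
      · rcases eq_or_lt_of_le hs.1 with heq | hlt
        · have : s = k := Fin.ext heq.symm
          subst this
          constructor
          · rintro ⟨-, -, -⟩
            exact ⟨hs.1, hs.2, by omega⟩
          · rintro ⟨-, -, -⟩
            exact ⟨hs.1, hs.2, by omega⟩
        · have hsk : s ≠ k := by
            intro h
            subst h
            omega
          rcases lt_trichotomy ((x s : ℕ)) ((x k : ℕ)) with hv | hv | hv
          · constructor
            · rintro ⟨-, -, -⟩
              exact ⟨hs.1, hs.2, by omega⟩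
            · rintro ⟨-, -, -⟩
              exact ⟨hs.1, hs.2, by omega⟩
          · exact absurd (x.injective (Fin.ext hv)) hsk
          · -- x s > x k and s in the open window, so x s > y k
            have hbig : (y k : ℕ) < (x s : ℕ) := by
              by_contra hle
              push_neg at hle
              have : l ≤ s := S2.min'_le s (mem_filter.mpr ⟨mem_univ s, by omega, hv, hle⟩)
              have : (l : ℕ) ≤ (s : ℕ) := this
              omega
            constructor
            · rintro ⟨-, -, h⟩
              omega
            · rintro ⟨-, -, h⟩
              omega
      · constructor
        · rintro ⟨h1, h2, -⟩
          exact absurd ⟨h1, h2⟩ hs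
        · rintro ⟨h1, h2, -⟩
          exact absurd ⟨h1, h2⟩ hs
    -- the y-window count at threshold i is strictly below the one at y k + 1
    have hyw : (univ.filter fun s : Fin n =>
        (k : ℕ) ≤ (s : ℕ) ∧ (s : ℕ) < j ∧ (y s : ℕ) < i).card + 1
        ≤ (univ.filter fun s : Fin n =>
          (k : ℕ) ≤ (s : ℕ) ∧ (s : ℕ) < j ∧ (y s : ℕ) < (y k : ℕ) + 1).card := by
      have hnm : k ∉ univ.filter fun s : Fin n =>
          (k : ℕ) ≤ (s : ℕ) ∧ (s : ℕ) < j ∧ (y s : ℕ) < i := by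
        simp only [mem_filter, mem_univ, true_and]
        rintro ⟨-, -, h⟩
        omega
      have hsub : insert k (univ.filter fun s : Fin n =>
          (k : ℕ) ≤ (s : ℕ) ∧ (s : ℕ) < j ∧ (y s : ℕ) < i)
          ⊆ univ.filter fun s : Fin n =>
            (k : ℕ) ≤ (s : ℕ) ∧ (s : ℕ) < j ∧ (y s : ℕ) < (y k : ℕ) + 1 := by
        intro s hs
        rcases mem_insert.mp hs with hs | hs
        · subst hs
          simp only [mem_filter, mem_univ, true_and]
          exact ⟨le_rfl, hj1, by omega⟩
        · simp only [mem_filter, mem_univ, true_and] at hs ⊢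
          exact ⟨hs.1, hs.2.1, by omega⟩
      have := Finset.card_le_card hsub
      rw [Finset.card_insert_of_notMem hnm] at this
      omega
    have h5 := hrk ((y k : ℕ) + 1) j
    rw [hxw] at hwx1
    omega
  -- the new permutation
  refine ⟨Equiv.swap (x k) (x l) * x, ⟨⟨x k, x l, ne_of_lt hval, rfl⟩, ?_⟩, ?_, ?_, ?_⟩
  · -- length goes up by exactly one
    have := invNum_swap x k l hklt hval
    have hempty : (univ.filter fun s : Fin n =>
        (k : ℕ) < (s : ℕ) ∧ (s : ℕ) < (l : ℕ)
          ∧ (x k : ℕ) < (x s : ℕ) ∧ (x s : ℕ) < (x l : ℕ)) = ∅ := by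
      rw [Finset.filter_eq_empty_iff]
      rintro m - ⟨h1, h2, h3, h4⟩
      exact hwindow m h1 h2 ⟨h3, h4⟩
    rw [hempty] at this
    simpa using this
  · -- y still below x'
    intro i j
    have key := rk_swap x k l (ne_of_lt hklt) i j
    by_cases hbad : (k : ℕ) < j ∧ j ≤ (l : ℕ) ∧ (x k : ℕ) < i ∧ i ≤ (x l : ℕ)
    · have h1 := hstrict i j hbad.1 hbad.2.1 hbad.2.2.1 hbad.2.2.2
      have h2 := rk_swap_strict x k l hklt hval i j hbad.1 hbad.2.1 hbad.2.2.1 hbad.2.2.2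
      omega
    · have h1 := hrk i j
      push_neg at hbad
      have hc1 : (k : ℕ) < (l : ℕ) := hkl
      have hc2 : (x k : ℕ) < (x l : ℕ) := hxkl
      split_ifs at key <;> omega
  · -- x' below x
    intro i j
    exact rk_swap_le x k l hklt hval i j
  · -- strict decrease somewhere in the grid
    refine ⟨(x k : ℕ) + 1, (k : ℕ) + 1, by omega, by omega, ?_⟩
    have := rk_swap_strict x k l hklt hval ((x k : ℕ) + 1) ((k : ℕ) + 1)
      (by omega) (by omega) (by omega) (by omega)
    omega

end Bwd

section Main
variable {n : ℕ}

def rkSum (n : ℕ) (x : Equiv.Perm (Fin n)) : ℕ :=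
  ∑ i ∈ Finset.range (n + 1), ∑ j ∈ Finset.range (n + 1), rkPerm n x i j

lemma rkSum_lt {x x' : Equiv.Perm (Fin n)}
    (hle : ∀ i j, rkPerm n x' i j ≤ rkPerm n x i j)
    (hstrict : ∃ i0 j0, i0 ≤ n ∧ j0 ≤ n ∧ rkPerm n x' i0 j0 < rkPerm n x i0 j0) :
    rkSum n x' < rkSum n x := by
  obtain ⟨i0, j0, hi0, hj0, hs⟩ := hstrict
  apply Finset.sum_lt_sum
  · intro i _
    exact Finset.sum_le_sum fun j _ => hle i j
  · refine ⟨i0, Finset.mem_range.mpr (by omega), ?_⟩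
    apply Finset.sum_lt_sum
    · intro j _
      exact hle i0 j
    · exact ⟨j0, Finset.mem_range.mpr (by omega), hs⟩

lemma bwd_main (y : Equiv.Perm (Fin n)) :
    ∀ (N : ℕ) (x : Equiv.Perm (Fin n)), rkSum n x ≤ N →
      (∀ i j, rkPerm n y i j ≤ rkPerm n x i j) →
      Relation.ReflTransGen (BruhatCov n) x y := by
  intro N
  induction N using Nat.strong_induction_on with
  | _ N ih =>
    intro x hM hrk
    by_cases hxy : x = y
    · subst hxy
      exact Relation.ReflTransGen.refl
    · obtain ⟨x', hcov, hrk', hle', hstrict'⟩ := step_exists x y hxy hrk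
      have hlt : rkSum n x' < rkSum n x := rkSum_lt hle' hstrict'
      exact Relation.ReflTransGen.head hcov
        (ih (rkSum n x') (by omega) x' le_rfl hrk')


/-- Ehresmann tableau criterion: `y` lies above `w` in the order
generated by `u < τ ∘ u`, `ℓ(τ ∘ u) = ℓ(u) + 1`, iff
`#([i] ∩ w[j]) ≥ #([i] ∩ y[j])` for all `1 ≤ i, j ≤ n`. -/
theorem bruhat_iff_tableau (n : ℕ) (w y : Equiv.Perm (Fin n)) :
    Relation.ReflTransGen (BruhatCov n) w y ↔
      ∀ i j : ℕ, 1 ≤ i → i ≤ n → 1 ≤ j → j ≤ n → rkPerm n y i j ≤ rkPerm n w i j := by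
  constructor
  · intro h i j _ _ _ _
    exact rtg_rk_le h i j
  · intro h
    exact bwd_main y (rkSum n w) w le_rfl
      (rk_ext w y fun i j h1 h2 h3 h4 => h i j h1 h2 h3 h4)


end Main

end TwoFlagsLine
end
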